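/- arXiv:1011.2987 — 6 statements merged into one kernel-verified Lean document; each statement's English description precedes it below -/
import Mathlib

section
/- Let G be a finitely generated group and let H be either a quotient of G or a finite index subgroup of G. If H has exponential conjugacy growth, then so does G. Similarly, if H has uniform exponential conjugacy growth, then so does G. -/
open scoped Pointwise

/-- `S` is a finite symmetric generating set of `G` containing the identity. -/
def IsSymmGenSet {G : Type*} [Group G] (S : Finset G) : Prop :=
  Subgroup.closure (S : Set G) = ⊤ ∧ (∀ g ∈ S, g⁻¹ ∈ S) ∧ (1 : G) ∈ S

/-- Number of conjugacy classes of `G` meeting the set `A`. -/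
noncomputable def conjClassCount {G : Type*} [Group G] (A : Set G) : ℕ :=
  Set.ncard {c : ConjClasses G | ∃ g ∈ A, ConjClasses.mk g = c}

/-- `c_{G,Σ}(n)`: the number of conjugacy classes of `G` meeting the `n`-ball `Σ^n`. -/
noncomputable def conjGrowth {G : Type*} [Group G] (S : Finset G) (n : ℕ) : ℕ :=
  conjClassCount ((S : Set G) ^ n)

/-- `C_{G,Σ} = liminf_{n→∞} (1/n) log c_{G,Σ}(n)`. -/
noncomputable def conjGrowthRate {G : Type*} [Group G] (S : Finset G) : ℝ :=
  Filter.liminf (fun n : ℕ => Real.log (conjGrowth S n) / n) Filter.atTop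

/-- A group has exponential conjugacy growth if `C_{G,Σ} > 0` for some (equivalently every)
finite symmetric generating set containing the identity. -/
def HasExpConjGrowth (G : Type*) [Group G] : Prop :=
  ∃ S : Finset G, IsSymmGenSet S ∧ 0 < conjGrowthRate S

/-- A group has uniform exponential conjugacy growth if `C_{G,Σ} ≥ ε > 0` for every finite
symmetric generating set containing the identity. -/
def HasUnifExpConjGrowth (G : Type*) [Group G] : Prop :=
  ∃ ε : ℝ, 0 < ε ∧ ∀ S : Finset G, IsSymmGenSet S → ε ≤ conjGrowthRate S

/-! ### Auxiliary lemmas -/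

open Filter Set

section Counting

variable {G : Type*} [Group G] {H : Type*} [Group H]

lemma conjClassCount_eq_ncard_image (A : Set G) :
    conjClassCount A = (ConjClasses.mk '' A).ncard := rfl

lemma setFinite_pow {A : Set G} (hA : A.Finite) (n : ℕ) : (A ^ n).Finite := by
  induction n with
  | zero => simpa using Set.finite_one
  | succ n ih => rw [pow_succ]; exact ih.mul hA

lemma conjClassCount_le_of_subset {A B : Set G} (h : A ⊆ B) (hB : B.Finite) :
    conjClassCount A ≤ conjClassCount B := by
  rw [conjClassCount_eq_ncard_image, conjClassCount_eq_ncard_image]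
  exact Set.ncard_le_ncard (Set.image_mono h) (hB.image _)

lemma one_le_conjClassCount {A : Set G} (hA : A.Finite) (h1 : A.Nonempty) :
    1 ≤ conjClassCount A := by
  rw [conjClassCount_eq_ncard_image]
  exact (Set.ncard_pos (hA.image _)).mpr (h1.image _)

lemma conjClassCount_le_ncard {A : Set G} (hA : A.Finite) : conjClassCount A ≤ A.ncard := by
  rw [conjClassCount_eq_ncard_image]
  exact Set.ncard_image_le hA

lemma ncard_pow_le (A : Set G) (n : ℕ) : (A ^ n).ncard ≤ A.ncard ^ n := by
  induction n with
  | zero =>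
      have h1 : (A ^ 0 : Set G) = {1} := by rw [pow_zero]; rfl
      rw [h1, Set.ncard_singleton, pow_zero]
  | succ n ih =>
      rw [pow_succ, pow_succ]
      calc (A ^ n * A).ncard ≤ (A ^ n).ncard * A.ncard := by
            rw [← Nat.card_coe_set_eq, ← Nat.card_coe_set_eq, ← Nat.card_coe_set_eq]
            exact Set.natCard_mul_le
        _ ≤ A.ncard ^ n * A.ncard := Nat.mul_le_mul_right _ ih

variable {S T : Finset G}

lemma one_le_conjGrowth (hS1 : (1 : G) ∈ S) (n : ℕ) : 1 ≤ conjGrowth S n :=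
  one_le_conjClassCount (setFinite_pow S.finite_toSet n)
    ⟨1, Set.one_mem_pow (by exact_mod_cast hS1)⟩

lemma conjGrowth_le_card_pow (n : ℕ) : conjGrowth S n ≤ S.card ^ n := by
  refine (conjClassCount_le_ncard (setFinite_pow S.finite_toSet n)).trans ?_
  calc ((S : Set G) ^ n).ncard ≤ (S : Set G).ncard ^ n := ncard_pow_le _ n
    _ = S.card ^ n := by rw [Set.ncard_coe_finset]

lemma conjGrowth_monotone (hS1 : (1 : G) ∈ S) : Monotone (conjGrowth S) := fun m n h =>
  conjClassCount_le_of_subset (Set.pow_subset_pow_right (by exact_mod_cast hS1) h)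
    (setFinite_pow S.finite_toSet n)

lemma conjGrowth_mono_set (h : S ⊆ T) (n : ℕ) : conjGrowth S n ≤ conjGrowth T n :=
  conjClassCount_le_of_subset (Set.pow_subset_pow_left (by exact_mod_cast h))
    (setFinite_pow T.finite_toSet n)

end Counting

section Liminf

lemma liminf_log_div_le (c₁ c₂ : ℕ → ℕ) (h : ∀ n, c₁ n ≤ c₂ n) (h1 : ∀ n, 1 ≤ c₁ n)
    (N : ℕ) (hN : ∀ n, c₂ n ≤ N ^ n) :
    Filter.liminf (fun n : ℕ => Real.log (c₁ n) / n) Filter.atTop ≤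
      Filter.liminf (fun n : ℕ => Real.log (c₂ n) / n) Filter.atTop := by
  have hN1 : 1 ≤ N := by
    have := (h1 1).trans ((h 1).trans (hN 1))
    simpa using this
  have h0 : ∀ n : ℕ, (0 : ℝ) ≤ Real.log (c₁ n) / n := fun n =>
    div_nonneg (Real.log_nonneg (by exact_mod_cast h1 n)) (Nat.cast_nonneg n)
  have hub : ∀ n : ℕ, Real.log (c₂ n) / n ≤ Real.log N := by
    intro n
    rcases Nat.eq_zero_or_pos n with rfl | hn
    · simpa using Real.log_nonneg (by exact_mod_cast hN1)
    · rw [div_le_iff₀ (by exact_mod_cast hn)]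
      calc Real.log (c₂ n) ≤ Real.log ((N : ℝ) ^ n) := by
            apply Real.log_le_log (by exact_mod_cast (h1 n).trans (h n))
            exact_mod_cast hN n
        _ = n * Real.log N := by rw [Real.log_pow]
        _ = Real.log N * n := by ring
  refine Filter.liminf_le_liminf (Filter.Eventually.of_forall fun n => ?_)
    (Filter.isBoundedUnder_of ⟨0, h0⟩)
    (Filter.isCoboundedUnder_ge_of_le _ hub)
  rcases Nat.eq_zero_or_pos n with rfl | hn
  · simp
  · rw [div_le_div_iff_of_pos_right (by exact_mod_cast hn)]
    exact Real.log_le_log (by exact_mod_cast h1 n) (by exact_mod_cast h n)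

end Liminf

section LemA

/-- Key analytic lemma: if `c' n ≤ d * c (L*n)` with `c` monotone, then a positive lower bound
on the liminf growth rate of `c'` gives one for `c`. -/
lemma liminf_lower_bound (c c' : ℕ → ℕ) (hmono : Monotone c) (L d N : ℕ) (hL : 1 ≤ L)
    (h1 : ∀ n, 1 ≤ c' n) (h2 : ∀ n, c' n ≤ d * c (L * n)) (hN : ∀ n, c n ≤ N ^ n)
    (ε : ℝ) (hε : 0 < ε)
    (hg : ε ≤ Filter.liminf (fun n : ℕ => Real.log (c' n) / n) Filter.atTop) :
    ε / (8 * L) ≤ Filter.liminf (fun n : ℕ => Real.log (c n) / n) Filter.atTop := by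
  have hd : 1 ≤ d := by
    by_contra hd
    have : d = 0 := by omega
    subst this
    simpa using (h1 0).trans (h2 0)
  have hLpos : (0 : ℝ) < L := by exact_mod_cast hL
  -- eventually `log (c' n) ≥ (ε/2) * n`
  have hlow : ∀ᶠ n : ℕ in Filter.atTop, ε / 2 < Real.log (c' n) / n := by
    refine Filter.eventually_lt_of_lt_liminf (lt_of_lt_of_le (by linarith) hg) ?_
    refine Filter.isBoundedUnder_of ⟨0, fun n => ?_⟩
    exact div_nonneg (Real.log_nonneg (by exact_mod_cast h1 n)) (Nat.cast_nonneg n)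
  obtain ⟨N₀, hN₀⟩ := Filter.eventually_atTop.1 hlow
  -- choose M₁ large enough that `log d / m ≤ ε/(8L)` for `m ≥ M₁`
  obtain ⟨M₁, hM₁⟩ := exists_nat_gt (Real.log d / (ε / (8 * L)))
  set M : ℕ := L * (max N₀ 1 + 1) + M₁ + 1 with hM
  have key : ∀ m : ℕ, M ≤ m → ε / (8 * L) ≤ Real.log (c m) / m := by
    intro m hm
    set n : ℕ := m / L with hn
    have hmpos : 0 < m := by omega
    have hmR : (0 : ℝ) < m := by exact_mod_cast hmpos
    have hnge : max N₀ 1 + 1 ≤ n := by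
      rw [hn, Nat.le_div_iff_mul_le (by omega)]
      calc (max N₀ 1 + 1) * L = L * (max N₀ 1 + 1) := by ring
        _ ≤ m := by omega
    have hn1 : 1 ≤ n := le_trans (by omega) hnge
    have hnN₀ : N₀ ≤ n := le_trans (le_max_left N₀ 1) (le_trans (Nat.le_succ _) hnge)
    have hLn : L * n ≤ m := by rw [hn, mul_comm]; exact Nat.div_mul_le_self m L
    have hmlt : m < 2 * L * n := by
      have h1' : m < (n + 1) * L := by
        rw [← Nat.div_lt_iff_lt_mul (by omega)]
        omega
      calc m < (n + 1) * L := h1'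
        _ ≤ (n + n) * L := by
            apply Nat.mul_le_mul_right
            omega
        _ = 2 * L * n := by ring
    -- c m ≥ 1
    have hcm1 : 1 ≤ c m := by
      have ha := h2 n
      have hb : d * c (L * n) ≤ d * c m := Nat.mul_le_mul_left d (hmono hLn)
      by_contra hc
      have hc0 : c m = 0 := by omega
      rw [hc0, Nat.mul_zero] at hb
      have := h1 n
      omega
    -- log (c' n) ≥ (ε/2) * n
    have hcn : ε / 2 * n ≤ Real.log (c' n) := by
      have := hN₀ n hnN₀
      have hnR : (0 : ℝ) < n := by exact_mod_cast hn1
      rw [lt_div_iff₀ hnR] at this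
      linarith
    -- log (c m) ≥ (ε/2) * n - log d
    have hlogcm : ε / 2 * n - Real.log d ≤ Real.log (c m) := by
      have hle : (c' n : ℝ) ≤ (d : ℝ) * (c m : ℝ) := by
        exact_mod_cast (h2 n).trans (Nat.mul_le_mul_left d (hmono hLn))
      have hlog : Real.log (c' n) ≤ Real.log d + Real.log (c m) := by
        calc Real.log (c' n) ≤ Real.log ((d : ℝ) * c m) :=
              Real.log_le_log (by exact_mod_cast h1 n) hle
          _ = Real.log d + Real.log (c m) := Real.log_mul
              (by exact_mod_cast Nat.one_le_iff_ne_zero.1 hd)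
              (by exact_mod_cast Nat.one_le_iff_ne_zero.1 hcm1)
      linarith [hcn]
    -- combine
    have hnm : (1 : ℝ) / (2 * L) ≤ (n : ℝ) / m := by
      rw [div_le_div_iff₀ (by positivity) hmR]
      have : (m : ℝ) ≤ 2 * L * n := by exact_mod_cast hmlt.le
      linarith
    have hlogd : Real.log d / m ≤ ε / (8 * L) := by
      have hdpos : 0 ≤ Real.log d := Real.log_nonneg (by exact_mod_cast hd)
      have hM₁m : (M₁ : ℝ) ≤ m := by exact_mod_cast (by omega : M₁ ≤ m)
      have : Real.log d / (ε / (8 * L)) < m := lt_of_lt_of_le hM₁ hM₁m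
      rw [div_lt_iff₀ (by positivity)] at this
      rw [div_le_iff₀ hmR]
      nlinarith
    have hmain : ε / (8 * L) ≤ (ε / 2 * n - Real.log d) / m := by
      have heq : (ε / 2 * n - Real.log d) / m = ε / 2 * ((n : ℝ) / m) - Real.log d / m := by
        ring
      rw [heq]
      have h4 : ε / (4 * L) ≤ ε / 2 * ((n : ℝ) / m) := by
        calc ε / (4 * L) = ε / 2 * (1 / (2 * L)) := by ring
          _ ≤ ε / 2 * ((n : ℝ) / m) := by
              exact mul_le_mul_of_nonneg_left hnm (by positivity)
      have h8 : ε / (8 * L) = ε / (4 * L) - ε / (8 * L) := by ring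
      linarith [hlogd]
    calc ε / (8 * L) ≤ (ε / 2 * n - Real.log d) / m := hmain
      _ ≤ Real.log (c m) / m := by
          rw [div_le_div_iff_of_pos_right hmR]
          exact hlogcm
  -- conclude
  have hcL : 1 ≤ c (L * 1) := by
    have ha := h2 1
    have hb := h1 1
    by_contra hc
    have hc0 : c (L * 1) = 0 := by omega
    rw [hc0, Nat.mul_zero] at ha
    omega
  have hN1 : 1 ≤ N := by
    by_contra h
    have h0 : N = 0 := by omega
    have := hN (L * 1)
    rw [h0, zero_pow (by omega : L * 1 ≠ 0)] at this
    omega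
  have hbound : ∀ n : ℕ, Real.log (c n) / n ≤ Real.log N := by
    intro n
    rcases Nat.eq_zero_or_pos n with rfl | hn
    · simpa using Real.log_nonneg (by exact_mod_cast hN1)
    · rcases Nat.eq_zero_or_pos (c n) with hc | hc
      · rw [hc]
        simpa using Real.log_nonneg (by exact_mod_cast hN1)
      · rw [div_le_iff₀ (by exact_mod_cast hn)]
        calc Real.log (c n) ≤ Real.log ((N : ℝ) ^ n) := by
              apply Real.log_le_log (by exact_mod_cast hc)
              exact_mod_cast hN n
          _ = n * Real.log N := by rw [Real.log_pow]
          _ = Real.log N * n := by ring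
  exact Filter.le_liminf_of_le (Filter.isCoboundedUnder_ge_of_le _ hbound)
    (Filter.eventually_atTop.2 ⟨M, key⟩)

end LemA

section Homs

variable {G : Type*} [Group G] {H : Type*} [Group H]

lemma mk_image_image (π : G →* H) (A : Set G) :
    ConjClasses.mk '' (⇑π '' A) = (ConjClasses.map π) '' (ConjClasses.mk '' A) := by
  rw [← Set.image_comp, ← Set.image_comp]
  rfl

lemma conjClassCount_image_hom_le (π : G →* H) (A : Set G) (hA : A.Finite) :
    conjClassCount (⇑π '' A) ≤ conjClassCount A := by
  rw [conjClassCount_eq_ncard_image, conjClassCount_eq_ncard_image, mk_image_image]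
  exact Set.ncard_image_le (hA.image _)

lemma conjClassesMap_injective (e : G ≃* H) :
    Function.Injective (ConjClasses.map e.toMonoidHom) := by
  intro x y hxy
  obtain ⟨a, rfl⟩ := ConjClasses.exists_rep x
  obtain ⟨b, rfl⟩ := ConjClasses.exists_rep y
  have hxy' : ConjClasses.mk (e a) = ConjClasses.mk (e b) := hxy
  rw [ConjClasses.mk_eq_mk_iff_isConj] at hxy' ⊢
  have := e.symm.toMonoidHom.map_isConj hxy'
  simpa using this

lemma conjClassCount_image_equiv (e : G ≃* H) (A : Set G) :
    conjClassCount (⇑e '' A) = conjClassCount A := by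
  rw [conjClassCount_eq_ncard_image, conjClassCount_eq_ncard_image]
  have h : ⇑e '' A = ⇑e.toMonoidHom '' A := rfl
  rw [h, mk_image_image]
  exact Set.ncard_image_of_injective _ (conjClassesMap_injective e)

end Homs

section Fiber

variable {G : Type*} [Group G]

lemma conjClassCount_subtype_le (K : Subgroup G) [K.FiniteIndex] (B : Set K) (hB : B.Finite) :
    conjClassCount B ≤ K.index * conjClassCount (⇑K.subtype '' B) := by
  classical
  rw [conjClassCount_eq_ncard_image, conjClassCount_eq_ncard_image, mk_image_image]
  set s : Finset (ConjClasses K) := (hB.image ConjClasses.mk).toFinset with hs_def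
  have hs : (s : Set (ConjClasses K)) = ConjClasses.mk '' B := Set.Finite.coe_toFinset _
  set f : ConjClasses K → ConjClasses G := ConjClasses.map K.subtype with hf_def
  rw [← hs, ← Finset.coe_image, Set.ncard_coe_finset, Set.ncard_coe_finset]
  refine Finset.card_le_mul_card_image s K.index ?_
  intro b hb
  -- the fiber over b injects into the set of right cosets of K
  obtain ⟨g₀, hg₀⟩ := ConjClasses.exists_rep b
  have key : ∀ x ∈ s.filter (fun x => f x = b), ∃ (z : G) (k : K),
      ConjClasses.mk k = x ∧ z * g₀ * z⁻¹ = (k : G) := by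
    intro x hx
    rw [Finset.mem_filter] at hx
    obtain ⟨k, hk⟩ := ConjClasses.exists_rep x
    have hfk : ConjClasses.mk ((k : K) : G) = ConjClasses.mk g₀ := by
      rw [hg₀, ← hx.2, hf_def, ← hk]
      rfl
    rw [ConjClasses.mk_eq_mk_iff_isConj] at hfk
    obtain ⟨z, hz⟩ := isConj_iff.1 hfk.symm
    exact ⟨z, k, hk, hz⟩
  choose z k hmk hcon using key
  haveI : Finite (Quotient (QuotientGroup.rightRel K)) :=
    Finite.of_equiv _ (QuotientGroup.quotientRightRelEquivQuotientLeftRel K).symm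
  have hinj : Function.Injective
      (fun x : {x // x ∈ s.filter (fun x => f x = b)} =>
        (Quotient.mk (QuotientGroup.rightRel K) (z x.1 x.2))) := by
    rintro ⟨x₁, h₁⟩ ⟨x₂, h₂⟩ hz
    simp only [Quotient.eq] at hz
    have hu : z x₂ h₂ * (z x₁ h₁)⁻¹ ∈ K := (QuotientGroup.rightRel_apply).1 hz
    set u : K := ⟨z x₂ h₂ * (z x₁ h₁)⁻¹, hu⟩ with hu_def
    have hconj : (k x₂ h₂ : G) = (u : G) * (k x₁ h₁ : G) * (u : G)⁻¹ := by
      rw [← hcon x₂ h₂, ← hcon x₁ h₁]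
      simp [hu_def]
      group
    have : k x₂ h₂ = u * k x₁ h₁ * u⁻¹ := by
      ext
      simpa using hconj
    have hcc : ConjClasses.mk (k x₁ h₁) = ConjClasses.mk (k x₂ h₂) := by
      rw [ConjClasses.mk_eq_mk_iff_isConj]
      exact isConj_iff.2 ⟨u, by rw [this]⟩
    exact Subtype.ext ((hmk x₁ h₁).symm.trans (hcc.trans (hmk x₂ h₂)))
  calc (s.filter (fun x => f x = b)).card
      = Nat.card {x // x ∈ s.filter (fun x => f x = b)} := by
        rw [Nat.card_eq_finsetCard]
    _ ≤ Nat.card (Quotient (QuotientGroup.rightRel K)) := Nat.card_le_card_of_injective _ hinj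
    _ = Nat.card (G ⧸ K) := Nat.card_congr (QuotientGroup.quotientRightRelEquivQuotientLeftRel K)
    _ = K.index := (Subgroup.index_eq_card K).symm

end Fiber

section Schreier

variable {G : Type*} [Group G]

lemma exists_short_rep (K : Subgroup G) [K.FiniteIndex] (S : Finset G) (hS1 : (1 : G) ∈ S) :
    ∀ n : ℕ, ∀ w ∈ (S : Set G) ^ n, ∃ t ∈ (S : Set G) ^ (K.index - 1), w * t⁻¹ ∈ K := by
  have h1coe : (1 : G) ∈ (S : Set G) := by exact_mod_cast hS1
  have hd : 0 < K.index := Nat.pos_of_ne_zero Subgroup.FiniteIndex.index_ne_zero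
  set R : ℕ → Set (G ⧸ K) := fun j => (fun w : G => ((w⁻¹ : G) : G ⧸ K)) '' ((S : Set G) ^ j)
    with hR
  have hmono : ∀ a b : ℕ, a ≤ b → R a ⊆ R b := fun a b hab =>
    Set.image_mono (Set.pow_subset_pow_right h1coe hab)
  have hstab : ∀ j : ℕ, R j = R (j + 1) → R (j + 1) = R (j + 2) := by
    intro j h
    refine Set.Subset.antisymm (hmono _ _ (by omega)) ?_
    rintro x ⟨w', hw', rfl⟩
    rw [pow_succ] at hw'
    obtain ⟨w, hw, s, hs, rfl⟩ := Set.mem_mul.1 hw'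
    have hmem : ((w⁻¹ : G) : G ⧸ K) ∈ R (j + 1) := ⟨w, hw, rfl⟩
    rw [← h] at hmem
    obtain ⟨v, hv, hvw⟩ := hmem
    refine ⟨v * s, Set.mul_mem_mul hv hs, ?_⟩
    have hvw' : v * w⁻¹ ∈ K := by
      have := (QuotientGroup.eq).1 hvw
      simpa using this
    rw [QuotientGroup.eq]
    simp only [mul_inv_rev, inv_inv]
    have : v * s * (s⁻¹ * w⁻¹) = v * w⁻¹ := by group
    rw [this]
    exact hvw'
  -- strictly increasing until stabilization
  have hfin : ∀ j, (R j).Finite := fun j => Set.toFinite _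
  have hchain : ∀ j : ℕ, R j = R (j + 1) ∨ j + 2 ≤ (R (j + 1)).ncard := by
    intro j
    induction j with
    | zero =>
        by_cases h : R 0 = R 1
        · exact Or.inl h
        · right
          have h0 : (R 0).ncard = 1 := by
            have : R 0 = {((1 : G) : G ⧸ K)} := by
              rw [hR]
              simp
            rw [this, Set.ncard_singleton]
          have hss : R 0 ⊂ R 1 := ssubset_of_subset_of_ne (hmono 0 1 (by omega)) h
          have := Set.ncard_lt_ncard hss (hfin 1)
          show 2 ≤ (R 1).ncard
          omega
    | succ j ih =>
        by_cases h : R (j + 1) = R (j + 2)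
        · exact Or.inl h
        · right
          rcases ih with ih | ih
          · exact absurd (hstab j ih) h
          · have hss : R (j + 1) ⊂ R (j + 2) :=
              ssubset_of_subset_of_ne (hmono _ _ (by omega)) h
            have := Set.ncard_lt_ncard hss (hfin (j + 2))
            show j + 3 ≤ (R (j + 2)).ncard
            omega
  -- the chain stabilizes by index - 1
  have hcard : ∀ j, (R j).ncard ≤ K.index := by
    intro j
    calc (R j).ncard ≤ (Set.univ : Set (G ⧸ K)).ncard :=
          Set.ncard_le_ncard (Set.subset_univ _) (Set.toFinite _)
      _ = Nat.card (G ⧸ K) := Set.ncard_univ _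
      _ = K.index := (Subgroup.index_eq_card K).symm
  have hstabd : R (K.index - 1) = R (K.index - 1 + 1) := by
    rcases hchain (K.index - 1) with h | h
    · exact h
    · exfalso
      have := hcard (K.index - 1 + 1)
      omega
  have hstep : ∀ i : ℕ, R (K.index - 1 + i) = R (K.index - 1 + i + 1) := by
    intro i
    induction i with
    | zero => exact hstabd
    | succ i ih2 => exact hstab _ ih2
  have hall : ∀ i : ℕ, R (K.index - 1 + i) = R (K.index - 1) := by
    intro i
    induction i with
    | zero => rfl
    | succ i ih => exact (hstep i).symm.trans ih
  have hsub : ∀ n : ℕ, R n ⊆ R (K.index - 1) := by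
    intro n
    rcases le_or_gt n (K.index - 1) with h | h
    · exact hmono _ _ h
    · obtain ⟨i, rfl⟩ := Nat.exists_eq_add_of_le h.le
      rw [hall i]
  intro n w hw
  have : ((w⁻¹ : G) : G ⧸ K) ∈ R (K.index - 1) := hsub n ⟨w, hw, rfl⟩
  obtain ⟨t, ht, htw⟩ := this
  refine ⟨t, ht, ?_⟩
  have := (QuotientGroup.eq).1 htw
  simp only [inv_inv] at this
  have h' : t * w⁻¹ ∈ K := this
  have : w * t⁻¹ = (t * w⁻¹)⁻¹ := by group
  rw [this]
  exact K.inv_mem h'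

lemma closure_inter_pow (K : Subgroup G) [K.FiniteIndex] (S : Finset G) (hS : IsSymmGenSet S) :
    Subgroup.closure ((K : Set G) ∩ (S : Set G) ^ (2 * K.index - 1)) = K := by
  obtain ⟨hgen, hsymm, h1⟩ := hS
  have h1coe : (1 : G) ∈ (S : Set G) := by exact_mod_cast h1
  have hd : 0 < K.index := Nat.pos_of_ne_zero Subgroup.FiniteIndex.index_ne_zero
  have hSinv : (S : Set G)⁻¹ = (S : Set G) := by
    ext g
    rw [Set.mem_inv]
    constructor
    · intro hg
      have := hsymm g⁻¹ (by exact_mod_cast hg)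
      simpa using this
    · intro hg
      exact_mod_cast hsymm g (by exact_mod_cast hg)
  have hSpowinv : ∀ m : ℕ, ((S : Set G) ^ m)⁻¹ = (S : Set G) ^ m := by
    intro m
    rw [← inv_pow, hSinv]
  apply le_antisymm
  · exact (Subgroup.closure_le K).2 Set.inter_subset_left
  · intro g hg
    -- every element lies in some power of S
    have hcov : ∀ x : G, ∃ n, x ∈ (S : Set G) ^ n := by
      intro x
      have hx : x ∈ Subgroup.closure (S : Set G) := by rw [hgen]; exact Subgroup.mem_top x
      refine Subgroup.closure_induction ?_ ?_ ?_ ?_ hx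
      · intro y hy
        exact ⟨1, by simpa using hy⟩
      · exact ⟨0, by simp⟩
      · rintro y z _ _ ⟨a, ha⟩ ⟨b, hb⟩
        exact ⟨a + b, by rw [pow_add]; exact Set.mul_mem_mul ha hb⟩
      · rintro y _ ⟨a, ha⟩
        refine ⟨a, ?_⟩
        rw [← hSpowinv a]
        exact Set.inv_mem_inv.2 ha
    obtain ⟨n, hn⟩ := hcov g
    set C : Set G := (K : Set G) ∩ (S : Set G) ^ (2 * K.index - 1) with hC
    have main : ∀ m : ℕ, ∀ w ∈ (S : Set G) ^ m,
        ∃ t ∈ (S : Set G) ^ (K.index - 1), w * t⁻¹ ∈ Subgroup.closure C := by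
      intro m
      induction m with
      | zero =>
          intro w hw
          have hw1 : w = 1 := by simpa using hw
          refine ⟨1, Set.one_mem_pow h1coe, ?_⟩
          rw [hw1]
          simpa using Subgroup.one_mem (Subgroup.closure C)
      | succ m ih =>
          intro w' hw'
          rw [pow_succ] at hw'
          obtain ⟨w, hw, s, hs, rfl⟩ := Set.mem_mul.1 hw'
          obtain ⟨t, ht, hc⟩ := ih w hw
          have hts : t * s ∈ (S : Set G) ^ K.index := by
            have h' : t * s ∈ (S : Set G) ^ (K.index - 1) * (S : Set G) ^ 1 :=
              Set.mul_mem_mul ht (by simpa using hs)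
            rw [← pow_add] at h'
            have : K.index - 1 + 1 = K.index := by omega
            rwa [this] at h'
          obtain ⟨t', ht', hK⟩ := exists_short_rep K S h1 K.index (t * s) hts
          refine ⟨t', ht', ?_⟩
          have haS : t * s * t'⁻¹ ∈ (S : Set G) ^ (2 * K.index - 1) := by
            have h1' : t'⁻¹ ∈ (S : Set G) ^ (K.index - 1) := by
              rw [← hSpowinv (K.index - 1)]
              exact Set.inv_mem_inv.2 ht'
            have h2' : t * s * t'⁻¹ ∈ (S : Set G) ^ K.index * (S : Set G) ^ (K.index - 1) :=
              Set.mul_mem_mul hts h1'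
            rw [← pow_add] at h2'
            have : K.index + (K.index - 1) = 2 * K.index - 1 := by omega
            rwa [this] at h2'
          have ha : t * s * t'⁻¹ ∈ Subgroup.closure C :=
            Subgroup.subset_closure ⟨hK, haS⟩
          have heq : w * s * t'⁻¹ = (w * t⁻¹) * (t * s * t'⁻¹) := by group
          rw [heq]
          exact mul_mem hc ha
    obtain ⟨t, ht, hct⟩ := main n g hn
    have hgt : g * t⁻¹ ∈ K := (Subgroup.closure_le K).2 Set.inter_subset_left hct
    have htK : t ∈ K := by
      have h' : (g * t⁻¹)⁻¹ * g ∈ K := K.mul_mem (K.inv_mem hgt) hg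
      have : (g * t⁻¹)⁻¹ * g = t := by group
      rwa [this] at h'
    have htC : t ∈ Subgroup.closure C := by
      apply Subgroup.subset_closure
      refine ⟨htK, ?_⟩
      exact Set.pow_subset_pow_right h1coe (by omega : K.index - 1 ≤ 2 * K.index - 1) ht
    have : g = (g * t⁻¹) * t := by group
    rw [this]
    exact mul_mem hct htC

end Schreier

section Transfer

variable {G : Type*} [Group G] {H : Type*} [Group H]

lemma coe_image_pow (π : G →* H) (S : Finset G) [DecidableEq H] (n : ℕ) :
    ((S.image π : Finset H) : Set H) ^ n = ⇑π '' ((S : Set G) ^ n) := by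
  rw [Finset.coe_image, ← Set.image_pow]

lemma conjGrowth_image_hom_le (π : G →* H) (S : Finset G) [DecidableEq H] (n : ℕ) :
    conjGrowth (S.image π) n ≤ conjGrowth S n := by
  unfold conjGrowth
  rw [coe_image_pow]
  exact conjClassCount_image_hom_le π _ (setFinite_pow S.finite_toSet n)

lemma isSymmGenSet_image (π : G →* H) (hπ : Function.Surjective π) (S : Finset G)
    (hS : IsSymmGenSet S) [DecidableEq H] : IsSymmGenSet (S.image π) := by
  obtain ⟨hgen, hsymm, h1⟩ := hS
  refine ⟨?_, ?_, ?_⟩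
  · rw [Finset.coe_image, ← MonoidHom.map_closure, hgen]
    rw [← MonoidHom.range_eq_map, MonoidHom.range_eq_top]
    exact hπ
  · intro g hg
    rw [Finset.mem_image] at hg ⊢
    obtain ⟨a, ha, rfl⟩ := hg
    exact ⟨a⁻¹, hsymm a ha, map_inv π a⟩
  · rw [Finset.mem_image]
    exact ⟨1, h1, map_one π⟩

/-- Rate comparison from a pointwise comparison of growth functions. -/
lemma conjGrowthRate_le_of_pointwise (T : Finset H) (S : Finset G)
    (h : ∀ n, conjGrowth T n ≤ conjGrowth S n) (hT1 : (1 : H) ∈ T) :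
    conjGrowthRate T ≤ conjGrowthRate S :=
  liminf_log_div_le _ _ h (one_le_conjGrowth hT1) S.card (fun _ => conjGrowth_le_card_pow _)

lemma conjGrowthRate_image_hom_le (π : G →* H) (S : Finset G) (hS1 : (1 : G) ∈ S)
    [DecidableEq H] : conjGrowthRate (S.image π) ≤ conjGrowthRate S :=
  conjGrowthRate_le_of_pointwise _ _ (conjGrowth_image_hom_le π S)
    (Finset.mem_image.2 ⟨1, hS1, map_one π⟩)

lemma conjGrowthRate_mono_set {S T : Finset G} (h : S ⊆ T) (hS1 : (1 : G) ∈ S) :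
    conjGrowthRate S ≤ conjGrowthRate T :=
  conjGrowthRate_le_of_pointwise _ _ (conjGrowth_mono_set h) hS1

lemma conjGrowth_image_equiv (e : G ≃* H) (T : Finset G) [DecidableEq H] (n : ℕ) :
    conjGrowth (T.image e) n = conjGrowth T n := by
  unfold conjGrowth
  have h : (T.image ⇑e) = T.image ⇑e.toMonoidHom := rfl
  rw [h, coe_image_pow]
  exact conjClassCount_image_equiv e _

lemma conjGrowthRate_image_equiv (e : G ≃* H) (T : Finset G) [DecidableEq H] :
    conjGrowthRate (T.image e) = conjGrowthRate T := by
  unfold conjGrowthRate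
  congr 1
  funext n
  rw [conjGrowth_image_equiv]

lemma isSymmGenSet_image_equiv (e : G ≃* H) (T : Finset G) (hT : IsSymmGenSet T)
    [DecidableEq H] : IsSymmGenSet (T.image e) := by
  have h : (T.image ⇑e) = T.image ⇑e.toMonoidHom := rfl
  rw [h]
  exact isSymmGenSet_image e.toMonoidHom (e.surjective) T hT

/-- Symmetrization of a generating set. -/
lemma isSymmGenSet_symmetrize [DecidableEq G] (A : Finset G)
    (hA : Subgroup.closure (A : Set G) = ⊤) : IsSymmGenSet (A ∪ A⁻¹ ∪ {1}) := by
  refine ⟨?_, ?_, ?_⟩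
  · rw [eq_top_iff, ← hA]
    apply Subgroup.closure_mono
    intro x hx
    simp only [Finset.coe_union, Set.mem_union]
    left; left; exact hx
  · intro g hg
    simp only [Finset.mem_union, Finset.mem_singleton] at hg ⊢
    rcases hg with (hg | hg) | hg
    · left; right
      rw [Finset.mem_inv]
      exact ⟨g, hg, rfl⟩
    · rw [Finset.mem_inv] at hg
      obtain ⟨b, hb, rfl⟩ := hg
      left; left
      simpa using hb
    · right
      rw [hg]
      exact inv_one
  · simp

end Transfer

section SubgroupRate

variable {G : Type*} [Group G]

lemma conjGrowth_subgroup_le (K : Subgroup G) [K.FiniteIndex] (T : Finset K) (S : Finset G)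
    (L : ℕ) (hsub : ⇑K.subtype '' (T : Set K) ⊆ (S : Set G) ^ L) (n : ℕ) :
    conjGrowth T n ≤ K.index * conjGrowth S (L * n) := by
  unfold conjGrowth
  calc conjClassCount ((T : Set K) ^ n)
      ≤ K.index * conjClassCount (⇑K.subtype '' ((T : Set K) ^ n)) :=
        conjClassCount_subtype_le K _ (setFinite_pow T.finite_toSet n)
    _ ≤ K.index * conjClassCount ((S : Set G) ^ (L * n)) := by
        apply Nat.mul_le_mul_left
        apply conjClassCount_le_of_subset _ (setFinite_pow S.finite_toSet _)
        rw [Set.image_pow]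
        calc (⇑K.subtype '' (T : Set K)) ^ n ⊆ ((S : Set G) ^ L) ^ n :=
              Set.pow_subset_pow_left hsub
          _ = (S : Set G) ^ (L * n) := by rw [← pow_mul]

lemma subgroup_rate_lower (K : Subgroup G) [K.FiniteIndex] (T : Finset K)
    (hT1 : (1 : K) ∈ T) (S : Finset G) (hS1 : (1 : G) ∈ S) (L : ℕ) (hL : 1 ≤ L)
    (hsub : ⇑K.subtype '' (T : Set K) ⊆ (S : Set G) ^ L) (ε : ℝ) (hε : 0 < ε)
    (hrate : ε ≤ conjGrowthRate T) : ε / (8 * L) ≤ conjGrowthRate S :=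
  liminf_lower_bound (conjGrowth S) (conjGrowth T) (conjGrowth_monotone hS1) L K.index S.card
    hL (one_le_conjGrowth hT1) (conjGrowth_subgroup_le K T S L hsub)
    (fun _ => conjGrowth_le_card_pow _) ε hε hrate

end SubgroupRate

section GenSet

variable {G : Type*} [Group G]

lemma symm_pow_inv {S : Finset G} (hsymm : ∀ g ∈ S, g⁻¹ ∈ S) (m : ℕ) {g : G}
    (hg : g ∈ (S : Set G) ^ m) : g⁻¹ ∈ (S : Set G) ^ m := by
  have hSinv : (S : Set G)⁻¹ = (S : Set G) := by
    ext x
    rw [Set.mem_inv]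
    constructor
    · intro hx
      have := hsymm x⁻¹ (by exact_mod_cast hx)
      simpa using this
    · intro hx
      exact_mod_cast hsymm x (by exact_mod_cast hx)
  have : g⁻¹ ∈ ((S : Set G) ^ m)⁻¹ := Set.inv_mem_inv.2 hg
  rwa [← inv_pow, hSinv] at this

/-- The finite symmetric generating set of a finite-index subgroup obtained from a ball. -/
lemma exists_good_genset (K : Subgroup G) [K.FiniteIndex] (S : Finset G)
    (hS : IsSymmGenSet S) :
    ∃ T : Finset K, IsSymmGenSet T ∧
      ⇑K.subtype '' (T : Set K) ⊆ (S : Set G) ^ (2 * K.index - 1) := by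
  classical
  set m := 2 * K.index - 1 with hm
  have hfin : {k : K | (k : G) ∈ (S : Set G) ^ m}.Finite := by
    apply Set.Finite.preimage (Set.injOn_of_injective Subtype.coe_injective)
      (setFinite_pow S.finite_toSet m)
  set T : Finset K := hfin.toFinset with hT
  have hcoe : (T : Set K) = {k : K | (k : G) ∈ (S : Set G) ^ m} := Set.Finite.coe_toFinset _
  have himg : ⇑K.subtype '' (T : Set K) = (K : Set G) ∩ (S : Set G) ^ m := by
    rw [hcoe]
    ext y
    constructor
    · rintro ⟨k, hk, rfl⟩
      exact ⟨k.2, hk⟩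
    · rintro ⟨hy, hy'⟩
      exact ⟨⟨y, hy⟩, hy', rfl⟩
  refine ⟨T, ⟨?_, ?_, ?_⟩, by rw [himg]; exact Set.inter_subset_right⟩
  · apply Subgroup.map_injective K.subtype_injective
    rw [MonoidHom.map_closure, himg, closure_inter_pow K S hS,
      ← MonoidHom.range_eq_map, Subgroup.range_subtype]
  · intro k hk
    rw [hT, Set.Finite.mem_toFinset] at hk ⊢
    exact symm_pow_inv hS.2.1 m hk
  · rw [hT, Set.Finite.mem_toFinset]
    exact Set.one_mem_pow (by exact_mod_cast hS.2.2)

end GenSet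

/-- Exponential (resp. uniform exponential) conjugacy growth passes from a quotient or a
finite index subgroup to the ambient finitely generated group. -/
theorem expConjGrowth_of_quotient_or_finiteIndexSubgroup {G H : Type*} [Group G] [Group H]
    [Group.FG G]
    (hGH : (∃ π : G →* H, Function.Surjective π) ∨
      (∃ K : Subgroup G, K.FiniteIndex ∧ Nonempty (H ≃* K))) :
    (HasExpConjGrowth H → HasExpConjGrowth G) ∧
    (HasUnifExpConjGrowth H → HasUnifExpConjGrowth G) := by
  classical
  obtain ⟨n₀, S₀, -, hS₀⟩ := Group.fg_iff'.mp ‹Group.FG G›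
  rcases hGH with ⟨π, hπ⟩ | ⟨K, hKfin, ⟨e⟩⟩
  · -- quotient case
    constructor
    · rintro ⟨T, hT, hTrate⟩
      set A : Finset G := S₀ ∪ T.image (Function.surjInv hπ) with hA
      have hAgen : Subgroup.closure (A : Set G) = ⊤ := by
        rw [eq_top_iff, ← hS₀]
        apply Subgroup.closure_mono
        intro x hx
        simp only [hA, Finset.coe_union, Set.mem_union]
        left; exact hx
      set S : Finset G := A ∪ A⁻¹ ∪ {1} with hSdef
      have hSgen : IsSymmGenSet S := isSymmGenSet_symmetrize A hAgen
      have hTsub : T ⊆ S.image π := by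
        intro t ht
        rw [Finset.mem_image]
        refine ⟨Function.surjInv hπ t, ?_, Function.surjInv_eq hπ t⟩
        simp only [hSdef, Finset.mem_union]
        left; left
        simp only [hA, Finset.mem_union]
        right
        exact Finset.mem_image.2 ⟨t, ht, rfl⟩
      refine ⟨S, hSgen, lt_of_lt_of_le hTrate ?_⟩
      calc conjGrowthRate T ≤ conjGrowthRate (S.image π) :=
            conjGrowthRate_mono_set hTsub hT.2.2
        _ ≤ conjGrowthRate S := conjGrowthRate_image_hom_le π S hSgen.2.2
    · rintro ⟨ε, hε, hu⟩
      refine ⟨ε, hε, fun S hS => ?_⟩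
      exact le_trans (hu (S.image π) (isSymmGenSet_image π hπ S hS))
        (conjGrowthRate_image_hom_le π S hS.2.2)
  · -- finite index subgroup case
    haveI := hKfin
    constructor
    · rintro ⟨T_H, hT_H, hrate⟩
      set T : Finset K := T_H.image e with hTdef
      have hTgen : IsSymmGenSet T := isSymmGenSet_image_equiv e T_H hT_H
      have hTrate : 0 < conjGrowthRate T := by
        rw [hTdef, conjGrowthRate_image_equiv e T_H]
        exact hrate
      set A : Finset G := S₀ ∪ T.image K.subtype with hA
      have hAgen : Subgroup.closure (A : Set G) = ⊤ := by
        rw [eq_top_iff, ← hS₀]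
        apply Subgroup.closure_mono
        intro x hx
        simp only [hA, Finset.coe_union, Set.mem_union]
        left; exact hx
      set S : Finset G := A ∪ A⁻¹ ∪ {1} with hSdef
      have hSgen : IsSymmGenSet S := isSymmGenSet_symmetrize A hAgen
      have hsub : ⇑K.subtype '' (T : Set K) ⊆ (S : Set G) ^ 1 := by
        rw [pow_one]
        rintro x ⟨k, hk, rfl⟩
        have : K.subtype k ∈ T.image K.subtype := Finset.mem_image.2 ⟨k, hk, rfl⟩
        have hmem : K.subtype k ∈ S := by
          simp only [hSdef, Finset.mem_union]
          left; left
          simp only [hA, Finset.mem_union]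
          right; exact this
        exact_mod_cast hmem
      have hfinal := subgroup_rate_lower K T hTgen.2.2 S hSgen.2.2 1 le_rfl hsub
        (conjGrowthRate T) hTrate le_rfl
      refine ⟨S, hSgen, lt_of_lt_of_le ?_ hfinal⟩
      have : (0 : ℝ) < 8 * ((1 : ℕ) : ℝ) := by norm_num
      exact div_pos hTrate this
    · rintro ⟨ε, hε, hu⟩
      have hd : 0 < K.index := Nat.pos_of_ne_zero Subgroup.FiniteIndex.index_ne_zero
      set L : ℕ := 2 * K.index - 1 with hL
      have hL1 : 1 ≤ L := by omega
      have hLR : (0 : ℝ) < 8 * (L : ℝ) := by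
        have : (0 : ℝ) < (L : ℝ) := by exact_mod_cast hL1
        linarith
      refine ⟨ε / (8 * (L : ℝ)), div_pos hε hLR, fun S hS => ?_⟩
      obtain ⟨T, hTgen, hsub⟩ := exists_good_genset K S hS
      have hεT : ε ≤ conjGrowthRate T := by
        have h1 := hu (T.image e.symm) (isSymmGenSet_image_equiv e.symm T hTgen)
        rwa [conjGrowthRate_image_equiv e.symm T] at h1
      exact subgroup_rate_lower K T hTgen.2.2 S hS.2.2 L hL1 hsub ε hε hεT
end

section
/- Let G be a finitely generated group and H a subgroup of G of finite index k. Let Σ be a finite symmetric generating set of G containing the identity. Then there exists a finite symmetric generating set Σ' of H containing the identity such that for all n, c_{G,Σ}(n) ≥ (1/k) · c_{H,Σ'}(⌊n/(2k+1)⌋). -/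
open scoped Pointwise

section Aux

variable {G : Type*} [Group G]

lemma one_mem_set_pow {S : Set G} (h1 : (1:G) ∈ S) : ∀ n, (1:G) ∈ S ^ n
  | 0 => by simp
  | n+1 => by
      rw [pow_succ]
      simpa using Set.mul_mem_mul (one_mem_set_pow h1 n) h1

lemma set_pow_subset {S : Set G} (h1 : (1:G) ∈ S) {a b : ℕ} (hab : a ≤ b) :
    S ^ a ⊆ S ^ b := by
  obtain ⟨c, rfl⟩ := Nat.exists_eq_add_of_le hab
  rw [pow_add]
  intro x hx
  simpa using Set.mul_mem_mul hx (one_mem_set_pow h1 c)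

lemma inv_mem_set_pow {S : Set G} (hinv : ∀ g ∈ S, g⁻¹ ∈ S) :
    ∀ n, ∀ x ∈ S ^ n, x⁻¹ ∈ S ^ n
  | 0 => by simp
  | n+1 => by
      intro x hx
      rw [pow_succ] at hx
      obtain ⟨a, ha, b, hb, rfl⟩ := hx
      rw [pow_succ']
      simpa [mul_inv_rev] using Set.mul_mem_mul (hinv b hb) (inv_mem_set_pow hinv n a ha)

lemma exists_mem_pow_of_gen {S : Finset G} (hS : IsSymmGenSet S) (x : G) :
    ∃ m : ℕ, x ∈ (S : Set G) ^ m := by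
  have hx : x ∈ Subgroup.closure (S : Set G) := hS.1 ▸ Subgroup.mem_top x
  refine Subgroup.closure_induction ?_ ?_ ?_ ?_ hx
  · exact fun y hy => ⟨1, by simpa using hy⟩
  · exact ⟨0, by simp⟩
  · rintro y z _ _ ⟨a, ha⟩ ⟨b, hb⟩
    exact ⟨a + b, by rw [pow_add]; exact Set.mul_mem_mul ha hb⟩
  · rintro y _ ⟨a, ha⟩
    exact ⟨a, inv_mem_set_pow (fun g hg => hS.2.1 g hg) a y ha⟩

/-- A monotone-step chain of subsets of a finite type which covers everything
reaches `univ` by time `card - 1`. -/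
lemma chain_univ {Q : Type*} [Finite Q] (f : ℕ → Set Q)
    (mono : ∀ j, f j ⊆ f (j+1))
    (step : ∀ j, f (j+1) = f j → f (j+2) = f (j+1))
    (ne : (f 0).Nonempty)
    (cover : ∀ x, ∃ j, x ∈ f j) :
    f (Nat.card Q - 1) = Set.univ := by
  have hmono : Monotone f := monotone_nat_of_le_succ mono
  have consec : ∀ j, f (j+1) = f j → ∀ i, f (j+i+1) = f (j+i) := by
    intro j hj i
    induction i with
    | zero => exact hj
    | succ i ih => exact step (j+i) ih
  have stable : ∀ j, f (j+1) = f j → ∀ i, f (j+i) = f j := by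
    intro j hj i
    induction i with
    | zero => rfl
    | succ i ih => exact (consec j hj i).trans ih
  have stableUniv : ∀ j, f (j+1) = f j → f j = Set.univ := by
    intro j hj
    ext x
    simp only [Set.mem_univ, iff_true]
    obtain ⟨i, hi⟩ := cover x
    rcases le_or_gt i j with h | h
    · exact hmono h hi
    · obtain ⟨d, rfl⟩ := Nat.exists_eq_add_of_le h.le
      exact (stable j hj d) ▸ hi
  have key : ∀ j, f j = Set.univ ∨ j + 1 ≤ (f j).ncard := by
    intro j
    induction j with
    | zero => exact Or.inr ((Set.ncard_pos (Set.toFinite _)).mpr ne)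
    | succ j ih =>
      rcases ih with h | h
      · exact Or.inl (Set.eq_univ_of_univ_subset (h ▸ mono j))
      · by_cases hj : f (j+1) = f j
        · exact Or.inl (Set.eq_univ_of_univ_subset ((stableUniv j hj) ▸ mono j))
        · right
          have hss : f j ⊂ f (j+1) := (mono j).ssubset_of_ne (Ne.symm hj)
          have := Set.ncard_lt_ncard hss (Set.toFinite _)
          omega
  have hne : Nonempty Q := ⟨ne.some⟩
  have hpos : 0 < Nat.card Q := Nat.card_pos
  rcases key (Nat.card Q - 1) with h | h
  · exact h
  · refine Set.eq_of_subset_of_ncard_le (Set.subset_univ _) ?_ (Set.toFinite _)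
    rw [Set.ncard_univ]
    omega

end Aux

section Main

variable {G : Type*} [Group G]

/-- Every right coset of a subgroup of index `k ≥ 1` has a representative in the
`(k-1)`-ball of a symmetric generating set. -/
lemma exists_short_coset_rep (H : Subgroup G) (k : ℕ) (hk : 0 < k) (hidx : H.index = k)
    (S : Finset G) (hS : IsSymmGenSet S) (g : G) :
    ∃ t ∈ (S : Set G) ^ (k - 1), g * t⁻¹ ∈ H := by
  have hfin : Finite (G ⧸ H) := Nat.finite_of_card_ne_zero (by
    show H.index ≠ 0
    omega)
  set q : G → G ⧸ H := fun x => QuotientGroup.mk x⁻¹ with hq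
  set f : ℕ → Set (G ⧸ H) := fun j => q '' ((S : Set G) ^ j) with hf
  have hcard : Nat.card (G ⧸ H) = k := hidx
  have huniv : f (k - 1) = Set.univ := by
    rw [← hcard]
    apply chain_univ
    · intro j
      exact Set.image_mono (set_pow_subset hS.2.2 (Nat.le_succ j))
    · intro j hj
      apply Set.Subset.antisymm
      · rintro x ⟨y, hy, rfl⟩
        rw [pow_succ] at hy
        obtain ⟨a, ha, s, hs, rfl⟩ := hy
        have hmem : q a ∈ f (j+1) := ⟨a, ha, rfl⟩
        rw [hj] at hmem
        obtain ⟨a', ha', hqa⟩ := hmem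
        have h1 : a' * a⁻¹ ∈ H := by simpa using QuotientGroup.eq.mp hqa
        refine ⟨a' * s, by rw [pow_succ]; exact Set.mul_mem_mul ha' hs, ?_⟩
        show QuotientGroup.mk (a' * s)⁻¹ = QuotientGroup.mk (a * s)⁻¹
        rw [QuotientGroup.eq]
        have h2 : ((a' * s)⁻¹)⁻¹ * (a * s)⁻¹ = a' * a⁻¹ := by group
        rw [h2]; exact h1
      · exact Set.image_mono (set_pow_subset hS.2.2 (by omega))
    · exact ⟨q 1, 1, by simp, rfl⟩
    · intro x
      obtain ⟨y, rfl⟩ := QuotientGroup.mk_surjective x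
      obtain ⟨m, hm⟩ := exists_mem_pow_of_gen hS y⁻¹
      exact ⟨m, y⁻¹, hm, by simp [hq]⟩
  have : q g ∈ f (k - 1) := huniv ▸ Set.mem_univ _
  obtain ⟨t, ht, hqt⟩ := this
  refine ⟨t, ht, ?_⟩
  have : t * g⁻¹ ∈ H := by
    rw [hq] at hqt
    have := QuotientGroup.eq.mp hqt
    simpa using this
  simpa [mul_inv_rev] using H.inv_mem this

end Main

section Count

variable {G : Type*} [Group G]

lemma conjClassCount_eq_image (A : Set G) :
    conjClassCount A = Set.ncard (ConjClasses.mk '' A) := rfl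

lemma conj_count_le (H : Subgroup G) (k : ℕ) (hk : 0 < k) (hidx : H.index = k)
    (A : Finset H) :
    Set.ncard (ConjClasses.mk '' (A : Set H)) ≤
      k * Set.ncard (ConjClasses.mk '' (Subtype.val '' (A : Set H))) := by
  classical
  have hfinQ : Finite (G ⧸ H) := Nat.finite_of_card_ne_zero (by
    show H.index ≠ 0; omega)
  set φ : ConjClasses H → ConjClasses G := ConjClasses.map H.subtype with hφ
  have hφmk : ∀ h : H, φ (ConjClasses.mk h) = ConjClasses.mk (h : G) := fun h => rfl
  obtain ⟨r, hr⟩ : ∃ r : ConjClasses H → H, ∀ d, ConjClasses.mk (r d) = d :=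
    ⟨fun d => (ConjClasses.exists_rep d).choose, fun d => (ConjClasses.exists_rep d).choose_spec⟩
  have fiber : ∀ b : ConjClasses G,
      {d : ConjClasses H | φ d = b}.Finite ∧ {d : ConjClasses H | φ d = b}.ncard ≤ k := by
    intro b
    rcases isEmpty_or_nonempty {d : ConjClasses H // φ d = b} with he | hne
    · have : {d : ConjClasses H | φ d = b} = ∅ := by
        rw [← Set.isEmpty_coe_sort]; exact he
      rw [this]; exact ⟨Set.finite_empty, by simp⟩
    · obtain ⟨⟨d0, hd0⟩⟩ := hne
      have e1 : ∀ d : ConjClasses H, φ d = ConjClasses.mk ((r d : H) : G) := by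
        intro d
        rw [← hφmk (r d), hr d]
      have hb : ConjClasses.mk ((r d0 : H) : G) = b := by
        rw [← hd0]; exact (e1 d0).symm
      have spec : ∀ d : {d : ConjClasses H // φ d = b},
          ∃ g : G, g * ((r d0 : H) : G) * g⁻¹ = ((r d.1 : H) : G) := by
        rintro ⟨d, hd⟩
        have h1 : ConjClasses.mk ((r d : H) : G) = ConjClasses.mk ((r d0 : H) : G) := by
          rw [hb, ← hd, e1 d]
        exact isConj_iff.mp (ConjClasses.mk_eq_mk_iff_isConj.mp h1.symm)
      choose gf hgf using spec
      set F : {d : ConjClasses H // φ d = b} → G ⧸ H :=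
        fun d => QuotientGroup.mk (gf d)⁻¹ with hF
      have hFinj : Function.Injective F := by
        intro d1 d2 hFeq
        have hx : gf d1 * (gf d2)⁻¹ ∈ H := by
          simpa using QuotientGroup.eq.mp hFeq
        set x : H := ⟨gf d1 * (gf d2)⁻¹, hx⟩ with hxdef
        have hcoe : ((x * r d2.1 * x⁻¹ : H) : G) = ((r d1.1 : H) : G) := by
          push_cast
          rw [← hgf d1, ← hgf d2]
          rw [show (x : G) = gf d1 * (gf d2)⁻¹ from rfl]
          group
        have heq : (x * r d2.1 * x⁻¹ : H) = r d1.1 := Subtype.coe_injective hcoe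
        have hmkeq : ConjClasses.mk (r d1.1) = ConjClasses.mk (r d2.1) := by
          rw [← heq]
          exact (ConjClasses.mk_eq_mk_iff_isConj.mpr (isConj_iff.mpr ⟨x, rfl⟩)).symm
        apply Subtype.ext
        rw [← hr d1.1, ← hr d2.1, hmkeq]
      haveI : Finite {d : ConjClasses H // φ d = b} := Finite.of_injective F hFinj
      refine ⟨Set.finite_coe_iff.mp ‹_›, ?_⟩
      rw [← Nat.card_coe_set_eq]
      exact le_trans (Nat.card_le_card_of_injective F hFinj) (le_of_eq hidx)
  set T : Finset (ConjClasses H) := A.image ConjClasses.mk with hTdef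
  have h1 : ConjClasses.mk '' (A : Set H) = (T : Set (ConjClasses H)) := by
    rw [hTdef, Finset.coe_image]
  have h2 : ConjClasses.mk '' (Subtype.val '' (A : Set H)) =
      ((T.image φ : Finset (ConjClasses G)) : Set (ConjClasses G)) := by
    rw [hTdef, Finset.coe_image, Finset.coe_image, Set.image_image, Set.image_image]
    exact Set.image_congr fun h _ => (hφmk h).symm
  rw [h1, h2, Set.ncard_coe_finset, Set.ncard_coe_finset]
  apply Finset.card_le_mul_card_image
  intro b _
  calc (T.filter (fun a => φ a = b)).card
      = ((T.filter (fun a => φ a = b) : Finset (ConjClasses H)) :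
          Set (ConjClasses H)).ncard := (Set.ncard_coe_finset _).symm
    _ ≤ {d : ConjClasses H | φ d = b}.ncard := by
        apply Set.ncard_le_ncard _ (fiber b).1
        intro d hd
        simp only [Finset.coe_filter, Set.mem_setOf_eq] at hd
        exact hd.2
    _ ≤ k := (fiber b).2

end Count

/-- For a subgroup `H` of index `k` in `G`, there is a finite symmetric generating set `Σ'`
of `H` containing the identity with `c_{G,Σ}(n) ≥ (1/k)·c_{H,Σ'}(⌊n/(2k+1)⌋)` for all `n`. -/
theorem conjGrowth_finiteIndexSubgroup {G : Type*} [Group G]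
    (H : Subgroup G) (k : ℕ) (hk : 0 < k) (hidx : H.index = k)
    (S : Finset G) (hS : IsSymmGenSet S) :
    ∃ S' : Finset H, IsSymmGenSet S' ∧
      ∀ n : ℕ, conjGrowth S' (n / (2 * k + 1)) ≤ k * conjGrowth S n := by
  classical
  set T : Set G := (S : Set G) ^ (2 * k + 1) with hT
  set S' : Finset H := (S ^ (2 * k + 1)).preimage Subtype.val
    (Subtype.val_injective.injOn) with hS'def
  have hS'coe : (S' : Set H) = Subtype.val ⁻¹' T := by
    rw [hS'def, Finset.coe_preimage, Finset.coe_pow, hT]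
  have hSinv : ∀ g ∈ (S : Set G), g⁻¹ ∈ (S : Set G) := fun g hg => hS.2.1 g hg
  have hone : (1 : H) ∈ S' := by
    rw [← Finset.mem_coe, hS'coe]
    show ((1 : H) : G) ∈ T
    simpa using one_mem_set_pow hS.2.2 (2 * k + 1)
  have hinv : ∀ h ∈ S', h⁻¹ ∈ S' := by
    intro h hh
    rw [← Finset.mem_coe, hS'coe] at hh ⊢
    show ((h⁻¹ : H) : G) ∈ T
    simpa using inv_mem_set_pow hSinv (2 * k + 1) (h : G) hh
  have repf := exists_short_coset_rep H k hk hidx S hS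
  have key : ∀ m : ℕ, ∀ g ∈ (S : Set G) ^ m, ∀ t ∈ (S : Set G) ^ (k - 1),
      ∀ hgt : g * t⁻¹ ∈ H, (⟨g * t⁻¹, hgt⟩ : H) ∈ Subgroup.closure (S' : Set H) := by
    intro m
    induction m with
    | zero =>
      intro g hg t ht hgt
      apply Subgroup.subset_closure
      rw [hS'coe]
      show (g * t⁻¹ : G) ∈ T
      have hg1 : g = 1 := by simpa using hg
      subst hg1
      rw [one_mul]
      exact set_pow_subset hS.2.2 (by omega) (inv_mem_set_pow hSinv _ t ht)
    | succ m ih =>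
      intro g hg t ht hgt
      rw [pow_succ] at hg
      obtain ⟨g', hg', s, hs, rfl⟩ := hg
      obtain ⟨t', ht', hgt'⟩ := repf g'
      have hmemH : t' * s * t⁻¹ ∈ H := by
        have heq : t' * s * t⁻¹ = (g' * t'⁻¹)⁻¹ * (g' * s * t⁻¹) := by group
        rw [heq]
        exact H.mul_mem (H.inv_mem hgt') hgt
      have hval : (⟨g' * s * t⁻¹, hgt⟩ : H) =
          ⟨g' * t'⁻¹, hgt'⟩ * ⟨t' * s * t⁻¹, hmemH⟩ := by
        apply Subtype.ext
        show g' * s * t⁻¹ = (g' * t'⁻¹) * (t' * s * t⁻¹)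
        group
      rw [hval]
      apply Subgroup.mul_mem
      · exact ih g' hg' t' ht' hgt'
      · apply Subgroup.subset_closure
        rw [hS'coe]
        show (t' * s * t⁻¹ : G) ∈ T
        have h1 : t' * s ∈ (S : Set G) ^ (k - 1 + 1) := by
          rw [pow_succ]; exact Set.mul_mem_mul ht' hs
        have h3 : t' * s * t⁻¹ ∈ (S : Set G) ^ (k - 1 + 1) * (S : Set G) ^ (k - 1) :=
          Set.mul_mem_mul h1 (inv_mem_set_pow hSinv _ t ht)
        rw [← pow_add] at h3
        exact set_pow_subset hS.2.2 (by omega) h3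
  have hgen : Subgroup.closure (S' : Set H) = ⊤ := by
    rw [eq_top_iff]
    intro h _
    obtain ⟨m, hm⟩ := exists_mem_pow_of_gen hS (h : G)
    obtain ⟨t, ht, hht⟩ := repf (h : G)
    have htH : t ∈ H := by
      have heq : t = ((h : G) * t⁻¹)⁻¹ * (h : G) := by group
      rw [heq]
      exact H.mul_mem (H.inv_mem hht) h.2
    have h1 : (⟨(h : G) * t⁻¹, hht⟩ : H) ∈ Subgroup.closure (S' : Set H) :=
      key m _ hm t ht hht
    have h2 : (⟨t, htH⟩ : H) ∈ Subgroup.closure (S' : Set H) := by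
      apply Subgroup.subset_closure
      rw [hS'coe]
      show (t : G) ∈ T
      exact set_pow_subset hS.2.2 (by omega) ht
    have heq : h = ⟨(h : G) * t⁻¹, hht⟩ * ⟨t, htH⟩ := by
      apply Subtype.ext
      show (h : G) = (h : G) * t⁻¹ * t
      group
    rw [heq]
    exact Subgroup.mul_mem _ h1 h2
  refine ⟨S', ⟨hgen, hinv, hone⟩, ?_⟩
  intro n
  set m : ℕ := n / (2 * k + 1) with hm
  have valpow : ∀ j : ℕ, ∀ h : H, h ∈ (S' : Set H) ^ j → (h : G) ∈ T ^ j := by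
    intro j
    induction j with
    | zero =>
      intro h hh
      have : h = 1 := by simpa using hh
      subst this
      simp
    | succ j ih =>
      intro h hh
      rw [pow_succ] at hh ⊢
      obtain ⟨a, ha, b, hb, rfl⟩ := hh
      have hb' : (b : G) ∈ T := by rw [hS'coe] at hb; exact hb
      exact Set.mul_mem_mul (ih a ha) hb'
  have hcoeS'm : ((S' ^ m : Finset H) : Set H) = (S' : Set H) ^ m := Finset.coe_pow _ _
  have hsub : Subtype.val '' ((S' : Set H) ^ m) ⊆ (S : Set G) ^ n := by
    rintro x ⟨h, hh, rfl⟩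
    have hmem := valpow m h hh
    rw [hT, ← pow_mul] at hmem
    have hle : (2 * k + 1) * m ≤ n := by
      rw [mul_comm]; exact Nat.div_mul_le_self n (2 * k + 1)
    exact set_pow_subset hS.2.2 hle hmem
  have hfin : ((S : Set G) ^ n).Finite := by
    rw [← Finset.coe_pow]; exact (S ^ n).finite_toSet
  calc conjGrowth S' m
      = Set.ncard (ConjClasses.mk '' ((S' ^ m : Finset H) : Set H)) := by
        rw [conjGrowth, conjClassCount_eq_image, hcoeS'm]
    _ ≤ k * Set.ncard (ConjClasses.mk '' (Subtype.val '' ((S' ^ m : Finset H) : Set H))) :=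
        conj_count_le H k hk hidx (S' ^ m)
    _ ≤ k * Set.ncard (ConjClasses.mk '' ((S : Set G) ^ n)) := by
        apply Nat.mul_le_mul_left
        exact Set.ncard_le_ncard (Set.image_mono (by rw [hcoeS'm]; exact hsub))
          (hfin.image _)
    _ = k * conjGrowth S n := by rw [conjGrowth, conjClassCount_eq_image]
end

section
/- Let K be a field and let Γ be a subgroup of Aff(K). Then Γ is virtually nilpotent if and only if the image of Γ under the projection Aff(K) → K^× is finite, or the intersection of Γ with the translation subgroup K is trivial. -/
open scoped Pointwise

/-- The affine group of the line over `K`: pairs `(b, a)` representing `x ↦ a x + b`. -/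
def Aff (K : Type*) [Field K] : Type _ := K × Kˣ

namespace Aff

variable {K : Type*} [Field K]

instance instGroup : Group (Aff K) where
  mul := fun p q : K × Kˣ => ((p.1 + (p.2 : K) * q.1, p.2 * q.2) : K × Kˣ)
  one := ((0, 1) : K × Kˣ)
  inv := fun p : K × Kˣ => ((((p.2⁻¹ : Kˣ) : K) * (-p.1), p.2⁻¹) : K × Kˣ)
  mul_assoc := by
    rintro ⟨b1, a1⟩ ⟨b2, a2⟩ ⟨b3, a3⟩
    refine Prod.ext ?_ ?_
    · show (b1 + (a1 : K) * b2) + ((a1 * a2 : Kˣ) : K) * b3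
        = b1 + (a1 : K) * (b2 + (a2 : K) * b3)
      push_cast; ring
    · show a1 * a2 * a3 = a1 * (a2 * a3)
      exact mul_assoc _ _ _
  one_mul := by
    rintro ⟨b, a⟩
    refine Prod.ext ?_ ?_
    · show (0 : K) + ((1 : Kˣ) : K) * b = b
      simp
    · show (1 : Kˣ) * a = a
      simp
  mul_one := by
    rintro ⟨b, a⟩
    refine Prod.ext ?_ ?_
    · show b + (a : K) * 0 = b
      simp
    · show a * 1 = a
      simp
  inv_mul_cancel := by
    rintro ⟨b, a⟩
    refine Prod.ext ?_ ?_
    · show ((a⁻¹ : Kˣ) : K) * (-b) + ((a⁻¹ : Kˣ) : K) * b = 0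
      ring
    · show a⁻¹ * a = 1
      simp

/-- The affine map `u(a,b) : x ↦ a x + b`. -/
def u (a : Kˣ) (b : K) : Aff K := ((b, a) : K × Kˣ)

/-- The projection `Aff(K) → K^×` onto the linear part. -/
def toUnitsHom (K : Type*) [Field K] : Aff K →* Kˣ where
  toFun p := (p : K × Kˣ).2
  map_one' := rfl
  map_mul' _ _ := rfl

/-- An element of `Aff K` is unipotent when its linear part is trivial. -/
def IsUnipotent (p : Aff K) : Prop := toUnitsHom K p = 1

end Aff

/-- A group is virtually nilpotent if it has a nilpotent subgroup of finite index. -/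
def VirtuallyNilpotent (G : Type*) [Group G] : Prop :=
  ∃ H : Subgroup G, H.FiniteIndex ∧ Group.IsNilpotent H

/-- A group is virtually solvable if it has a solvable subgroup of finite index. -/
def VirtuallySolvable (G : Type*) [Group G] : Prop :=
  ∃ H : Subgroup G, H.FiniteIndex ∧ IsSolvable H

/-- A global field is a finite extension of `ℚ` or of `𝔽_p(t)` for a prime `p`. -/
def IsGlobalField (K : Type*) [Field K] : Prop :=
  (∃ _ : CharZero K, FiniteDimensional ℚ K) ∨
  (∃ (p : ℕ) (_ : Fact p.Prime) (_ : Algebra (RatFunc (ZMod p)) K),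
    FiniteDimensional (RatFunc (ZMod p)) K)

open scoped commutatorElement

namespace Aff

variable {K : Type*} [Field K]

lemma u_mul (a₁ a₂ : Kˣ) (b₁ b₂ : K) :
    u a₁ b₁ * u a₂ b₂ = u (a₁ * a₂) (b₁ + (a₁ : K) * b₂) := rfl

lemma u_inv (a : Kˣ) (b : K) : (u a b)⁻¹ = u a⁻¹ (((a⁻¹ : Kˣ) : K) * (-b)) := rfl

lemma one_def : (1 : Aff K) = u 1 0 := rfl

lemma eq_u (p : Aff K) : p = u ((p : K × Kˣ).2) ((p : K × Kˣ).1) := rfl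

lemma u_inj_b {a a' : Kˣ} {b b' : K} (h : u a b = u a' b') : b = b' :=
  congrArg (fun p : Aff K => (p : K × Kˣ).1) h

lemma commutator_u (a : Kˣ) (b c : K) :
    ⁅u a c, u (1 : Kˣ) b⁆ = u 1 (((a : K) - 1) * b) := by
  rw [commutatorElement_def, u_inv, u_inv, u_mul, u_mul, u_mul]
  congr 1
  · group
  · push_cast
    field_simp
    ring

lemma conj_u (a : Kˣ) (c b : K) :
    u a c * u (1 : Kˣ) b * (u a c)⁻¹ = u 1 ((a : K) * b) := by
  rw [u_inv, u_mul, u_mul]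
  congr 1
  · group
  · push_cast
    field_simp
    ring

lemma translations_comm (p q : Aff K) (hp : toUnitsHom K p = 1) (hq : toUnitsHom K q = 1) :
    p * q = q * p := by
  rw [eq_u p, eq_u q]
  have hp' : ((p : K × Kˣ).2) = 1 := hp
  have hq' : ((q : K × Kˣ).2) = 1 := hq
  rw [hp', hq', u_mul, u_mul]
  congr 1
  simp [add_comm]

end Aff

lemma isNilpotent_of_comm {G : Type*} [Group G] (hc : ∀ x y : G, x * y = y * x) :
    Group.IsNilpotent G := by
  rw [nilpotent_iff_lowerCentralSeries]
  refine ⟨1, le_bot_iff.mp ?_⟩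
  rw [lowerCentralSeries_one, commutator_def, Subgroup.commutator_le]
  intro g _ h _
  rw [Subgroup.mem_bot, commutatorElement_eq_one_iff_mul_comm]
  exact hc g h

/-- A subgroup of `Aff(K)` is virtually nilpotent iff its image in `K^×` is finite or it
meets the translation subgroup (the kernel of the projection to `K^×`) trivially. -/
theorem virtuallyNilpotent_iff_aff {K : Type*} [Field K] (Γ : Subgroup (Aff K)) :
    VirtuallyNilpotent Γ ↔
      (↑(Γ.map (Aff.toUnitsHom K)) : Set Kˣ).Finite ∨
        Γ ⊓ (Aff.toUnitsHom K).ker = ⊥ := by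
  set f : ↥Γ →* Kˣ := (Aff.toUnitsHom K).comp Γ.subtype with hf
  have hrange : f.range = Γ.map (Aff.toUnitsHom K) := by
    rw [hf, MonoidHom.range_comp, Subgroup.range_subtype]
  constructor
  · rintro ⟨H, hHfi, hHnil⟩
    by_contra hcon
    push_neg at hcon
    obtain ⟨hinf, hne⟩ := hcon
    -- infinite range
    haveI hinfR : Infinite ↥f.range := by
      rw [hrange]
      exact Set.infinite_coe_iff.mpr hinf
    -- nontrivial translation in Γ
    obtain ⟨⟨t, htmem⟩, ht1⟩ := Subgroup.ne_bot_iff_exists_ne_one.mp hne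
    obtain ⟨htΓ, htker⟩ := htmem
    have ht2 : ((t : K × Kˣ).2) = 1 := htker
    set b : K := (t : K × Kˣ).1 with hb
    have htu : t = Aff.u 1 b := by rw [Aff.eq_u t, ht2]
    have hb0 : b ≠ 0 := by
      intro h0
      apply ht1
      refine Subtype.ext ?_
      show t = 1
      rw [htu, h0, ← Aff.one_def]
    -- the kernel of f is infinite
    have key : ∀ a : Kˣ, a ∈ f.range → Aff.u 1 ((a : K) * b) ∈ Γ := by
      intro a ha
      obtain ⟨g, hg⟩ := MonoidHom.mem_range.mp ha
      have hmem : (g : Aff K) * t * (g : Aff K)⁻¹ ∈ Γ :=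
        Γ.mul_mem (Γ.mul_mem g.2 htΓ) (Γ.inv_mem g.2)
      have hg2 : (((g : Aff K) : K × Kˣ).2) = a := hg
      rw [htu, Aff.eq_u (g : Aff K), hg2, Aff.conj_u] at hmem
      exact hmem
    have hker2 : ∀ x : K, Aff.u 1 x ∈ Γ → ∀ hx : Aff.u 1 x ∈ Γ,
        (⟨Aff.u 1 x, hx⟩ : ↥Γ) ∈ f.ker := by
      intro x _ hx
      exact rfl
    let φ : ↥f.range → ↥f.ker := fun a =>
      ⟨⟨Aff.u 1 (((a : Kˣ) : K) * b), key a a.2⟩, rfl⟩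
    have hφinj : Function.Injective φ := by
      intro a₁ a₂ hEq
      have h1 : Aff.u (1:Kˣ) (((a₁ : Kˣ) : K) * b) = Aff.u 1 (((a₂ : Kˣ) : K) * b) :=
        congrArg (fun z : ↥f.ker => ((z : ↥Γ) : Aff K)) hEq
      have h2 := Aff.u_inj_b h1
      have h3 : ((a₁ : Kˣ) : K) = ((a₂ : Kˣ) : K) := mul_right_cancel₀ hb0 h2
      exact Subtype.ext (Units.ext h3)
    haveI : Infinite ↥f.ker := Infinite.of_injective φ hφinj
    -- find a nontrivial translation in H
    haveI := hHfi
    haveI : (H.subgroupOf f.ker).FiniteIndex := inferInstance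
    have hHk : H.subgroupOf f.ker ≠ ⊥ := by
      intro h0
      have := Subgroup.FiniteIndex.index_ne_zero (H := H.subgroupOf f.ker)
      rw [h0, Subgroup.index_bot, Nat.card_eq_zero_of_infinite] at this
      exact this rfl
    obtain ⟨⟨⟨τ, hτker⟩, hτH⟩, hτ1⟩ := Subgroup.ne_bot_iff_exists_ne_one.mp hHk
    have hτ1' : τ ≠ 1 := by
      intro h0
      exact hτ1 (Subtype.ext (Subtype.ext h0))
    set c : K := ((τ : Aff K) : K × Kˣ).1 with hcdef
    have hτ2 : (((τ : Aff K) : K × Kˣ).2) = 1 := hτker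
    have hτu : (τ : Aff K) = Aff.u 1 c := by rw [Aff.eq_u (τ : Aff K), hτ2]
    have hc0 : c ≠ 0 := by
      intro h0
      apply hτ1'
      refine Subtype.ext ?_
      show (τ : Aff K) = 1
      rw [hτu, h0, ← Aff.one_def]
    -- find an element of H with nontrivial linear part
    have hEx : ∃ h ∈ H, f h ≠ 1 := by
      by_contra hno
      push_neg at hno
      have hle : H ≤ f.ker := fun x hx => hno x hx
      haveI : f.ker.FiniteIndex := Subgroup.finiteIndex_of_le hle
      have h1 : f.ker.index ≠ 0 := Subgroup.FiniteIndex.index_ne_zero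
      rw [Subgroup.index_ker] at h1
      haveI : Finite ↥f.range := (Nat.card_ne_zero.mp h1).2
      apply hinf
      rw [← hrange]
      exact Set.toFinite _
    obtain ⟨h, hhH, hh1⟩ := hEx
    set a : Kˣ := f h with hadef
    have hhu : (h : Aff K) = Aff.u a (((h : Aff K) : K × Kˣ).1) := Aff.eq_u _
    -- iterated commutators stay nontrivial, contradicting nilpotency
    obtain ⟨n, hn⟩ := nilpotent_iff_lowerCentralSeries.mp hHnil
    set h' : ↥H := ⟨h, hhH⟩ with hh'
    set τ' : ↥H := ⟨τ, hτH⟩ with hτ'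
    set x : ℕ → ↥H := fun m => (fun y => ⁅h', y⁆)^[m] τ' with hx
    have main : ∀ m, x m ∈ (⊤ : Subgroup ↥H).lowerCentralSeries m ∧
        (((x m : ↥Γ) : Aff K)) = Aff.u 1 (((a : K) - 1) ^ m * c) := by
      intro m
      induction m with
      | zero =>
        refine ⟨Subgroup.mem_top _, ?_⟩
        show ((τ' : ↥Γ) : Aff K) = _
        rw [pow_zero, one_mul, hτ', hτu]
      | succ m ih =>
        have hxs : x (m + 1) = ⁅h', x m⁆ := Function.iterate_succ_apply' _ _ _
        constructor
        · rw [hxs, show ⁅h', x m⁆ = (⁅x m, h'⁆)⁻¹ from (commutatorElement_inv (x m) h').symm]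
          exact Subgroup.inv_mem _
            (Subgroup.commutator_mem_commutator ih.1 (Subgroup.mem_top _))
        · rw [hxs]
          have hcoe : (((⁅h', x m⁆ : ↥H) : ↥Γ) : Aff K)
              = ⁅((h' : ↥Γ) : Aff K), ((x m : ↥Γ) : Aff K)⁆ := by
            simp [commutatorElement_def]
          rw [hcoe, ih.2, show ((h' : ↥Γ) : Aff K) = Aff.u a (((h : Aff K) : K × Kˣ).1) from hhu,
            Aff.commutator_u]
          congr 1
          ring
    have hxn1 : x n = 1 := by
      have := (main n).1
      rw [hn] at this
      exact Subgroup.mem_bot.mp this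
    have hval := (main n).2
    rw [hxn1] at hval
    have hval' : Aff.u (1 : Kˣ) 0 = Aff.u 1 (((a : K) - 1) ^ n * c) := by
      rw [← Aff.one_def]
      exact hval
    have h0 : (0 : K) = ((a : K) - 1) ^ n * c := Aff.u_inj_b hval'
    have h1 : ((a : K) - 1) ^ n = 0 := by
      rcases mul_eq_zero.mp h0.symm with h | h
      · exact h
      · exact absurd h hc0
    have h2 : (a : K) = 1 := sub_eq_zero.mp (pow_eq_zero_iff'.mp h1).1
    exact hh1 (Units.ext h2)
  · rintro (hfin | htriv)
    · -- kernel of f is abelian, finite index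
      refine ⟨f.ker, ?_, ?_⟩
      · constructor
        rw [Subgroup.index_ker]
        refine Nat.card_ne_zero.mpr ⟨⟨1, one_mem _⟩, ?_⟩
        rw [hrange]
        exact Set.finite_coe_iff.mpr hfin
      · refine isNilpotent_of_comm ?_
        rintro ⟨⟨x, hxΓ⟩, hx⟩ ⟨⟨y, hyΓ⟩, hy⟩
        exact Subtype.ext (Subtype.ext (Aff.translations_comm x y hx hy))
    · -- Γ injects into Kˣ, hence abelian
      have hker : f.ker = ⊥ := by
        refine (Subgroup.eq_bot_iff_forall _).mpr fun x hx => ?_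
        have : (x : Aff K) ∈ Γ ⊓ (Aff.toUnitsHom K).ker := ⟨x.2, hx⟩
        rw [htriv, Subgroup.mem_bot] at this
        exact Subtype.ext this
      have hinj : Function.Injective f := (MonoidHom.ker_eq_bot_iff f).mp hker
      refine ⟨⊤, inferInstance, isNilpotent_of_comm fun x y => Subtype.ext (hinj ?_)⟩
      rw [Subgroup.coe_mul, Subgroup.coe_mul, map_mul, map_mul, mul_comm]
end

section
/- Let K be a field. Then the centralizer in Aff(K) of any nontrivial element of Aff(K) is an abelian group. -/
open scoped Pointwise

/-- The centralizer in `Aff(K)` of any nontrivial element is abelian. -/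
theorem centralizer_abelian_aff {K : Type*} [Field K] (g : Aff K) (hg : g ≠ 1) :
    ∀ x y : Subgroup.centralizer ({g} : Set (Aff K)), x * y = y * x := by
  obtain ⟨b, a⟩ := g
  rintro ⟨⟨d, c⟩, hx⟩ ⟨⟨e, f⟩, hy⟩
  replace hx := Subgroup.mem_centralizer_iff.mp hx
  replace hy := Subgroup.mem_centralizer_iff.mp hy
  have hx' := hx (b, a) (Set.mem_singleton _)
  have hy' := hy (b, a) (Set.mem_singleton _)
  have h1 : b + (a : K) * d = d + (c : K) * b := congrArg Prod.fst hx'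
  have h2 : b + (a : K) * e = e + (f : K) * b := congrArg Prod.fst hy'
  refine Subtype.ext (Prod.ext ?_ (mul_comm c f))
  show d + (c : K) * e = e + (f : K) * d
  by_cases ha : (a : K) = 1
  · have hb : b ≠ 0 := by
      intro hb0
      apply hg
      show ((b, a) : K × Kˣ) = ((0, 1) : K × Kˣ)
      exact Prod.ext hb0 (Units.ext ha)
    have hc : (c : K) = 1 := by
      have h : ((c : K) - 1) * b = 0 := by linear_combination ha * d - h1
      rcases mul_eq_zero.mp h with h | h
      · linear_combination h
      · exact absurd h hb
    have hf : (f : K) = 1 := by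
      have h : ((f : K) - 1) * b = 0 := by linear_combination ha * e - h2
      rcases mul_eq_zero.mp h with h | h
      · linear_combination h
      · exact absurd h hb
    rw [hc, hf]; ring
  · have e1 : d * ((a : K) - 1) = b * ((c : K) - 1) := by linear_combination h1
    have e2 : e * ((a : K) - 1) = b * ((f : K) - 1) := by linear_combination h2
    have key : (d + (c : K) * e) * ((a : K) - 1) = (e + (f : K) * d) * ((a : K) - 1) := by
      linear_combination (1 - (f : K)) * e1 + ((c : K) - 1) * e2
    exact mul_right_cancel₀ (sub_ne_zero_of_ne ha) key
end

section
/- Let K be a field. Then every nilpotent subgroup of Aff(K) is abelian. -/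
open scoped Pointwise

open scoped commutatorElement

namespace AffAux

variable {K : Type*} [Field K]

lemma mul_def (p q : Aff K) : p * q =
    (((p : K × Kˣ).1 + ((p : K × Kˣ).2 : K) * (q : K × Kˣ).1,
      (p : K × Kˣ).2 * (q : K × Kˣ).2) : K × Kˣ) := rfl

lemma inv_def (p : Aff K) : p⁻¹ =
    ((((((p : K × Kˣ).2)⁻¹ : Kˣ) : K) * (-(p : K × Kˣ).1),
      ((p : K × Kˣ).2)⁻¹) : K × Kˣ) := rfl

lemma snd_mul (p q : Aff K) : ((p * q : Aff K) : K × Kˣ).2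
    = (p : K × Kˣ).2 * (q : K × Kˣ).2 := rfl

lemma one_def : (1 : Aff K) = ((0, 1) : K × Kˣ) := rfl

/-- Commutator of a translation with an arbitrary element. -/
lemma comm_formula (w x : Aff K) (hw : (w : K × Kˣ).2 = 1) :
    ⁅w, x⁆ = (((1 - (((x : K × Kˣ).2 : Kˣ) : K)) * (w : K × Kˣ).1, 1) : K × Kˣ) := by
  have hx : (((x : K × Kˣ).2 : Kˣ) : K) ≠ 0 := Units.ne_zero _
  rw [commutatorElement_def, mul_def, mul_def, mul_def, inv_def, inv_def]
  refine Prod.ext ?_ ?_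
  · dsimp only
    rw [hw]
    push_cast
    field_simp
    ring
  · dsimp only
    rw [hw]
    group

end AffAux

/-- Every nilpotent subgroup of `Aff(K)` is abelian. -/
theorem nilpotent_subgroup_aff_abelian {K : Type*} [Field K] (H : Subgroup (Aff K))
    (hH : Group.IsNilpotent H) : ∀ x y : H, x * y = y * x := by
  by_contra hcon
  push_neg at hcon
  obtain ⟨p, q, hpq⟩ := hcon
  -- notation for the linear part
  set A : Aff K → Kˣ := fun r => (r : K × Kˣ).2 with hA
  -- translations commute
  have htrans : ∀ u v : Aff K, A u = 1 → A v = 1 → u * v = v * u := by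
    intro u v hu hv
    rw [AffAux.mul_def, AffAux.mul_def]
    refine Prod.ext ?_ ?_
    · show (u : K × Kˣ).1 + (A u : K) * (v : K × Kˣ).1
        = (v : K × Kˣ).1 + (A v : K) * (u : K × Kˣ).1
      rw [hu, hv]; push_cast; ring
    · show A u * A v = A v * A u
      rw [hu, hv]
  -- some element of H has nontrivial linear part
  have hx : ∃ x : H, A (x : Aff K) ≠ 1 := by
    by_contra hall
    push_neg at hall
    exact hpq (Subtype.ext (htrans _ _ (hall p) (hall q)))
  obtain ⟨x, hax⟩ := hx
  set a : K := (A (x : Aff K) : K) with ha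
  have ha1 : (1 : K) - a ≠ 0 := fun h => hax (Units.ext (sub_eq_zero.mp h).symm)
  -- the commutator of p and q is a nontrivial translation
  set z : H := ⁅p, q⁆ with hz
  have hcoe : ∀ u v : H, ((⁅u, v⁆ : H) : Aff K) = ⁅(u : Aff K), (v : Aff K)⁆ := by
    intro u v
    simp [commutatorElement_def]
  have hzA : A (z : Aff K) = 1 := by
    have : A (z : Aff K) = ⁅A (p : Aff K), A (q : Aff K)⁆ := by
      rw [hz, hcoe]
      simp only [hA, commutatorElement_def]
      rfl
    rw [this, commutatorElement_eq_one_iff_mul_comm.mpr (mul_comm _ _)]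
  have hzne : (z : Aff K) ≠ 1 := by
    intro h
    apply hpq
    have hz1 : z = 1 := Subtype.ext (by simpa using h)
    have := commutatorElement_eq_one_iff_mul_comm.mp (hz.symm ▸ hz1)
    exact this
  set s : K := ((z : Aff K) : K × Kˣ).1 with hs
  have hsne : s ≠ 0 := by
    intro h
    apply hzne
    have : ((z : Aff K) : K × Kˣ) = ((0, 1) : K × Kˣ) := Prod.ext (by rw [← hs, h]) hzA
    exact this
  -- iterated commutators with x
  set c : ℕ → H := fun n => (fun w => ⁅w, x⁆)^[n] z with hc
  have hcsucc : ∀ n, c (n + 1) = ⁅c n, x⁆ := by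
    intro n
    rw [hc]
    simp [Function.iterate_succ_apply']
  have key : ∀ n, A ((c n : H) : Aff K) = 1 ∧
      (((c n : H) : Aff K) : K × Kˣ).1 = (1 - a) ^ n * s ∧
      (c n : H) ∈ Subgroup.lowerCentralSeries (⊤ : Subgroup H) (n + 1) := by
    intro n
    induction n with
    | zero =>
      refine ⟨hzA, by simp [show c 0 = z from rfl, hs], ?_⟩
      show z ∈ Subgroup.lowerCentralSeries (⊤ : Subgroup H) 1
      rw [hz, lowerCentralSeries_one]
      exact Subgroup.commutator_mem_commutator (Subgroup.mem_top p) (Subgroup.mem_top q)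
    | succ n ih =>
      obtain ⟨ih1, ih2, ih3⟩ := ih
      have hform := AffAux.comm_formula ((c n : H) : Aff K) ((x : H) : Aff K) ih1
      have hval : ((c (n + 1) : H) : Aff K)
          = (((1 - a) * ((1 - a) ^ n * s), 1) : K × Kˣ) := by
        rw [hcsucc n, hcoe, hform, ih2]
      refine ⟨?_, ?_, ?_⟩
      · show (((c (n + 1) : H) : Aff K) : K × Kˣ).2 = 1
        rw [hval]
      · rw [hval]
        show (1 - a) * ((1 - a) ^ n * s) = (1 - a) ^ (n + 1) * s
        ring
      · rw [hcsucc n]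
        have : Subgroup.lowerCentralSeries (⊤ : Subgroup H) (n + 2) = ⁅Subgroup.lowerCentralSeries (⊤ : Subgroup H) (n + 1), ⊤⁆ := rfl
        rw [this]
        exact Subgroup.commutator_mem_commutator ih3 (Subgroup.mem_top x)
  obtain ⟨n, hn⟩ := nilpotent_iff_lowerCentralSeries.mp hH
  obtain ⟨h1, h2, h3⟩ := key n
  have hmem : c n ∈ Subgroup.lowerCentralSeries (⊤ : Subgroup H) n :=
    lowerCentralSeries_antitone _ (Nat.le_succ n) h3
  rw [hn] at hmem
  have hcn1 : (c n : H) = 1 := Subgroup.mem_bot.mp hmem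
  rw [hcn1] at h2
  have : (0 : K) = (1 - a) ^ n * s := h2
  exact (mul_ne_zero (pow_ne_zero n ha1) hsne) this.symm
end

section
/- Let K be an infinite field with algebraic closure K̂, and let A be a finitely generated commutative K-algebra which is an integral domain. Suppose A is integral over a polynomial subring B = K[t_1,…,t_d] in d algebraically independent elements, and let u ∈ A be a nonzero element satisfying a monic polynomial of degree ≤ k with coefficients in B. Then there exists a K-algebra homomorphism φ : A → K̂ such that φ(B) ⊆ K and φ(u) ≠ 0; in particular, for every a ∈ A whose minimal monic polynomial over B has degree k, the element φ(a) has degree ≤ k over K. -/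
open Polynomial

/-- From a monic polynomial killing a nonzero element of a domain, one can extract one (with
coefficients in the same subalgebra, and smaller degree) whose constant coefficient is nonzero. -/
lemma exists_monic_constantCoeff_ne_zero
    {K : Type*} [CommSemiring K] {A : Type*} [CommRing A] [IsDomain A] [Algebra K A]
    (S : Subalgebra K A) {u : A} (hu : u ≠ 0) :
    ∀ (n : ℕ) (p : Polynomial A), p.natDegree ≤ n → p.Monic → (∀ i, p.coeff i ∈ S) →
      p.eval u = 0 →
      ∃ q : Polynomial A, q.Monic ∧ q.natDegree ≤ p.natDegree ∧ (∀ i, q.coeff i ∈ S) ∧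
        q.eval u = 0 ∧ q.coeff 0 ≠ 0 := by
  intro n
  induction n with
  | zero =>
    intro p hdeg hm hc he
    exfalso
    have h0 : p.natDegree = 0 := le_antisymm hdeg (Nat.zero_le _)
    rw [hm.natDegree_eq_zero.mp h0] at he
    simp at he
  | succ n ih =>
    intro p hdeg hm hc he
    by_cases h0 : p.coeff 0 = 0
    · -- p = divX p * X
      have hp0 : p.natDegree ≠ 0 := by
        intro h
        rw [hm.natDegree_eq_zero.mp h] at h0
        simp at h0
      have hdx : p.divX * X = p := by
        have := p.divX_mul_X_add
        rwa [h0, map_zero, add_zero] at this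
      have hqdeg : p.divX.natDegree = p.natDegree - 1 := p.natDegree_divX_eq_natDegree_tsub_one
      have hqm : p.divX.Monic := by
        unfold Polynomial.Monic Polynomial.leadingCoeff
        rw [hqdeg, Polynomial.coeff_divX, Nat.sub_add_cancel (Nat.one_le_iff_ne_zero.mpr hp0)]
        exact hm
      have hqe : p.divX.eval u = 0 := by
        have : p.divX.eval u * u = 0 := by
          have h2 : (p.divX * X).eval u = 0 := by rw [hdx]; exact he
          simpa using h2
        rcases mul_eq_zero.mp this with h | h
        · exact h
        · exact absurd h hu
      obtain ⟨q, h1, h2, h3, h4, h5⟩ := ih p.divX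
        (by omega) hqm (fun i => by rw [Polynomial.coeff_divX]; exact hc _) hqe
      exact ⟨q, h1, by omega, h3, h4, h5⟩
    · exact ⟨p, hm, le_rfl, hc, he, h0⟩

/-- Specialization lemma for integral extensions of polynomial rings: if `A` is a finitely
generated `K`-algebra (`K` an infinite field), integral over a polynomial subring
`B = K[t₁,…,t_d]`, and `u ≠ 0` satisfies a monic polynomial of degree `≤ k` over `B`, then
there is a `K`-algebra homomorphism `φ : A → K̂` mapping `B` into `K` and `u` to a nonzero
element; in particular any element of degree `≤ m` over `B` is sent to an element of degree
`≤ m` over `K`. -/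
theorem specialization_of_integral_over_polynomials
    {K : Type*} [Field K] [Infinite K]
    {A : Type*} [CommRing A] [IsDomain A] [Algebra K A] [Algebra.FiniteType K A]
    (d : ℕ) (ι : MvPolynomial (Fin d) K →ₐ[K] A) (hinj : Function.Injective ι)
    (hint : ∀ a : A, ∃ p : Polynomial A,
      p.Monic ∧ (∀ i, p.coeff i ∈ ι.range) ∧ p.eval a = 0)
    (u : A) (hu : u ≠ 0) (k : ℕ)
    (hu_deg : ∃ p : Polynomial A,
      p.Monic ∧ p.natDegree ≤ k ∧ (∀ i, p.coeff i ∈ ι.range) ∧ p.eval u = 0) :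
    ∃ φ : A →ₐ[K] AlgebraicClosure K,
      (∀ b ∈ ι.range, ∃ c : K, φ b = algebraMap K (AlgebraicClosure K) c) ∧
      φ u ≠ 0 ∧
      ∀ (a : A) (m : ℕ),
        (∃ p : Polynomial A,
          p.Monic ∧ p.natDegree ≤ m ∧ (∀ i, p.coeff i ∈ ι.range) ∧ p.eval a = 0) →
        (minpoly K (φ a)).natDegree ≤ m := by
  classical
  obtain ⟨p₀, hp₀m, hp₀deg, hp₀c, hp₀e⟩ := hu_deg
  obtain ⟨p, hpm, -, hpc, hpe, hp0⟩ :=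
    exists_monic_constantCoeff_ne_zero ι.range hu p₀.natDegree p₀ le_rfl hp₀m hp₀c hp₀e
  obtain ⟨b₀, hb₀⟩ := hpc 0
  have hb₀ne : b₀ ≠ 0 := fun h => hp0 (by rw [← hb₀, h, map_zero])
  have hexx : ∃ x : Fin d → K, MvPolynomial.eval x b₀ ≠ 0 := by
    by_contra h
    push_neg at h
    exact hb₀ne (MvPolynomial.funext (fun x => by rw [h x, map_zero]))
  obtain ⟨x, hx⟩ := hexx
  letI : Algebra (MvPolynomial (Fin d) K) A := ι.toRingHom.toAlgebra
  have halg : algebraMap (MvPolynomial (Fin d) K) A = ι.toRingHom := rfl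
  haveI : Algebra.IsIntegral (MvPolynomial (Fin d) K) A := by
    refine ⟨fun a => ?_⟩
    obtain ⟨q, hqm, hqc, hqe⟩ := hint a
    have hl : q ∈ Polynomial.lifts ι.toRingHom :=
      (Polynomial.lifts_iff_coeff_lifts q).mpr fun n => by
        obtain ⟨r, hr⟩ := hqc n; exact ⟨r, hr⟩
    obtain ⟨P, hPmap, hPdeg, hPm⟩ := Polynomial.lifts_and_degree_eq_and_monic hl hqm
    exact ⟨P, hPm, by rw [← Polynomial.eval_map, halg, hPmap, hqe]⟩
  haveI : (RingHom.ker (MvPolynomial.eval x :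
      MvPolynomial (Fin d) K →+* K)).IsPrime := by
    have : (RingHom.ker (MvPolynomial.eval x :
        MvPolynomial (Fin d) K →+* K)).IsMaximal :=
      RingHom.ker_isMaximal_of_surjective _
        (fun c => ⟨MvPolynomial.C c, MvPolynomial.eval_C _⟩)
    exact this.isPrime
  obtain ⟨Q, -, hQprime, hQcomap⟩ :=
    Ideal.exists_ideal_over_prime_of_isIntegral (S := A)
      (RingHom.ker (MvPolynomial.eval x : MvPolynomial (Fin d) K →+* K)) ⊥ (by
      intro r hr
      rw [Ideal.mem_comap, Ideal.mem_bot] at hr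
      have : r = 0 := hinj (show ι r = ι 0 by rw [map_zero]; exact hr)
      simp [this])
  haveI := hQprime
  have hfact : ∀ r : MvPolynomial (Fin d) K,
      Ideal.Quotient.mk Q (ι r) = algebraMap K (A ⧸ Q) (MvPolynomial.eval x r) := by
    intro r
    have hmem : r - MvPolynomial.C (MvPolynomial.eval x r) ∈
        RingHom.ker (MvPolynomial.eval x : MvPolynomial (Fin d) K →+* K) := by
      rw [RingHom.mem_ker, map_sub, MvPolynomial.eval_C, sub_self]
    rw [← hQcomap, Ideal.mem_comap, halg] at hmem
    have h1 : Ideal.Quotient.mk Q (ι r)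
        = Ideal.Quotient.mk Q (ι (MvPolynomial.C (MvPolynomial.eval x r))) :=
      Ideal.Quotient.eq.mpr (by rwa [← map_sub])
    rw [h1, ← MvPolynomial.algebraMap_eq, ι.commutes]
    exact (Ideal.Quotient.mkₐ K Q).commutes (MvPolynomial.eval x r)
  have hcomp : (Ideal.Quotient.mk Q).comp ι.toRingHom
      = (algebraMap K (A ⧸ Q)).comp (MvPolynomial.eval x) := RingHom.ext hfact
  have main : ∀ (a : A) (q : Polynomial A), q.Monic → (∀ i, q.coeff i ∈ ι.range) →
      q.eval a = 0 → ∃ q' : Polynomial K, q'.Monic ∧ q'.natDegree = q.natDegree ∧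
        Polynomial.aeval (Ideal.Quotient.mk Q a) q' = 0 := by
    intro a q hqm hqc hqe
    have hl : q ∈ Polynomial.lifts ι.toRingHom :=
      (Polynomial.lifts_iff_coeff_lifts q).mpr fun n => by
        obtain ⟨r, hr⟩ := hqc n; exact ⟨r, hr⟩
    obtain ⟨P, hPmap, hPdeg, hPm⟩ := Polynomial.lifts_and_degree_eq_and_monic hl hqm
    refine ⟨P.map (MvPolynomial.eval x), hPm.map _, ?_, ?_⟩
    · rw [hPm.natDegree_map]
      exact Polynomial.natDegree_eq_of_degree_eq hPdeg
    · rw [Polynomial.aeval_def, Polynomial.eval₂_map, ← hcomp,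
        ← Polynomial.hom_eval₂, ← Polynomial.eval_map, hPmap, hqe, map_zero]
  haveI : Algebra.IsIntegral K (A ⧸ Q) := by
    refine ⟨fun y => ?_⟩
    obtain ⟨a, rfl⟩ := Ideal.Quotient.mk_surjective y
    obtain ⟨q, hqm, hqc, hqe⟩ := hint a
    obtain ⟨q', hq'm, -, hq'e⟩ := main a q hqm hqc hqe
    exact ⟨q', hq'm, hq'e⟩
  haveI : NoZeroSMulDivisors K (A ⧸ Q) :=
    inferInstance
  set ψ : (A ⧸ Q) →ₐ[K] AlgebraicClosure K := IsAlgClosed.lift with hψ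
  have hψinj : Function.Injective ψ := by
    have hfield : IsField (A ⧸ Q) := isField_of_isIntegral_of_isField' (Field.toIsField K)
    letI : Field (A ⧸ Q) := hfield.toField
    exact ψ.toRingHom.injective
  refine ⟨ψ.comp (Ideal.Quotient.mkₐ K Q), ?_, ?_, ?_⟩
  · rintro b ⟨r, rfl⟩
    refine ⟨MvPolynomial.eval x r, ?_⟩
    show ψ (Ideal.Quotient.mk Q (ι r)) = _
    rw [hfact r, AlgHom.commutes]
  · have hπu : Ideal.Quotient.mk Q u ≠ 0 := by
      intro h
      rw [Ideal.Quotient.eq_zero_iff_mem] at h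
      have hconst : p.coeff 0 = -(p.divX.eval u * u) := by
        have h1 := p.divX_mul_X_add
        have h2 : (p.divX * X + Polynomial.C (p.coeff 0)).eval u = 0 := by rw [h1, hpe]
        simp only [Polynomial.eval_add, Polynomial.eval_mul, Polynomial.eval_X,
          Polynomial.eval_C] at h2
        linear_combination h2
      have hQmem : ι b₀ ∈ Q := by
        show ι.toRingHom b₀ ∈ Q
        rw [hb₀, hconst]
        exact Q.neg_mem (Q.mul_mem_left _ h)
      have hbm : b₀ ∈ RingHom.ker (MvPolynomial.eval x :
          MvPolynomial (Fin d) K →+* K) := by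
        rw [← hQcomap, Ideal.mem_comap, halg]; exact hQmem
      rw [RingHom.mem_ker] at hbm
      exact hx hbm
    intro h
    exact hπu (hψinj (by rw [map_zero]; exact h))
  · rintro a n ⟨q, hqm, hqdeg, hqc, hqe⟩
    obtain ⟨q', hq'm, hq'deg, hq'e⟩ := main a q hqm hqc hqe
    have heval : Polynomial.aeval ((ψ.comp (Ideal.Quotient.mkₐ K Q)) a) q' = 0 := by
      show Polynomial.aeval (ψ (Ideal.Quotient.mk Q a)) q' = 0
      rw [Polynomial.aeval_algHom_apply, hq'e, map_zero]
    have hdle := minpoly.degree_le_of_ne_zero K _ hq'm.ne_zero heval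
    calc ((minpoly K ((ψ.comp (Ideal.Quotient.mkₐ K Q)) a)).natDegree)
        ≤ q'.natDegree := Polynomial.natDegree_le_natDegree hdle
      _ = q.natDegree := hq'deg
      _ ≤ n := hqdeg
end
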